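/- arXiv:2003.00634 — 8 statements merged into one kernel-verified Lean document; each statement's English description precedes it below -/
import Mathlib

section
/- For any real vector κ ∈ ℝ^n, indices p ≠ q, and 2 ≤ l ≤ n, the following identity and inequality hold: σ_{l-1}(κ|p)·σ_{l-1}(κ|q) − σ_l(κ)·σ_{l-2}(κ|pq) = σ_{l-1}(κ|pq)² − σ_l(κ|pq)·σ_{l-2}(κ|pq), and if all entries of κ are nonnegative this quantity is nonnegative. -/
open Finset

/-- Elementary symmetric sum over an arbitrary index set. -/
noncomputable def esymmOn {n : ℕ} (κ : Fin n → ℝ) (A : Finset (Fin n)) (k : ℕ) : ℝ :=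
  ∑ s ∈ A.powersetCard k, ∏ i ∈ s, κ i

lemma esymmOn_zero {n : ℕ} (κ : Fin n → ℝ) (A : Finset (Fin n)) : esymmOn κ A 0 = 1 := by
  simp [esymmOn]

lemma esymmOn_nonneg {n : ℕ} {κ : Fin n → ℝ} (hκ : ∀ i, 0 ≤ κ i)
    (A : Finset (Fin n)) (k : ℕ) : 0 ≤ esymmOn κ A k := by
  refine Finset.sum_nonneg fun s _ => Finset.prod_nonneg fun i _ => hκ i

lemma esymmOn_insert {n : ℕ} (κ : Fin n → ℝ) {A : Finset (Fin n)} {p : Fin n}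
    (hp : p ∉ A) (k : ℕ) :
    esymmOn κ (insert p A) (k + 1) = esymmOn κ A (k + 1) + κ p * esymmOn κ A k := by
  unfold esymmOn
  rw [Finset.powersetCard_succ_insert hp, Finset.sum_union, Finset.sum_image, Finset.mul_sum]
  · congr 1
    refine Finset.sum_congr rfl fun s hs => ?_
    have hps : p ∉ s := fun h => hp ((Finset.mem_powersetCard.mp hs).1 h)
    rw [Finset.prod_insert hps]
  · intro s hs t ht hst
    have hps : p ∉ s := fun h => hp ((Finset.mem_powersetCard.mp hs).1 h)
    have hpt : p ∉ t := fun h => hp ((Finset.mem_powersetCard.mp ht).1 h)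
    have := congrArg (fun u => Finset.erase u p) hst
    simpa [Finset.erase_insert hps, Finset.erase_insert hpt] using this
  · rw [Finset.disjoint_left]
    intro s hs hs'
    obtain ⟨t, ht, rfl⟩ := Finset.mem_image.mp hs'
    have : p ∈ A := (Finset.mem_powersetCard.mp hs).1 (Finset.mem_insert_self p t)
    exact hp this

/-- Newton-type log-concavity plus zero propagation, by induction on the index set. -/
lemma esymmOn_newton {n : ℕ} {κ : Fin n → ℝ} (hκ : ∀ i, 0 ≤ κ i) (A : Finset (Fin n)) :
    (∀ k, esymmOn κ A k = 0 → esymmOn κ A (k + 1) = 0) ∧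
    (∀ k, esymmOn κ A k * esymmOn κ A (k + 2) ≤ esymmOn κ A (k + 1) ^ 2) := by
  induction A using Finset.induction_on with
  | empty =>
    have h0 : ∀ k, esymmOn κ (∅ : Finset (Fin n)) (k + 1) = 0 := by
      intro k
      rw [esymmOn, Finset.powersetCard_eq_empty.mpr (by simp)]; simp
    constructor
    · intro k _; exact h0 k
    · intro k
      have := esymmOn_nonneg hκ (∅ : Finset (Fin n)) k
      rw [h0 (k + 1)]
      nlinarith [h0 k]
  | @insert p A hp ih =>
    set a : ℕ → ℝ := esymmOn κ A with ha
    have hnn : ∀ k, 0 ≤ a k := fun k => esymmOn_nonneg hκ A k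
    have hx : 0 ≤ κ p := hκ p
    have hb0 : esymmOn κ (insert p A) 0 = 1 := esymmOn_zero κ _
    have hbs : ∀ k, esymmOn κ (insert p A) (k + 1) = a (k + 1) + κ p * a k :=
      fun k => esymmOn_insert κ hp k
    -- four-term log-concavity for a
    have lc4 : ∀ k, a k * a (k + 3) ≤ a (k + 1) * a (k + 2) := by
      intro k
      by_cases h3 : a (k + 3) = 0
      · rw [h3, mul_zero]
        exact mul_nonneg (hnn _) (hnn _)
      · have h2 : a (k + 2) ≠ 0 := fun h => h3 (ih.1 (k + 2) h)
        have h1 : a (k + 1) ≠ 0 := fun h => h2 (ih.1 (k + 1) h)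
        have h2p : 0 < a (k + 2) := lt_of_le_of_ne (hnn _) (Ne.symm h2)
        have h1p : 0 < a (k + 1) := lt_of_le_of_ne (hnn _) (Ne.symm h1)
        have hA := ih.2 k
        have hB := ih.2 (k + 1)
        nlinarith [mul_le_mul hA hB (mul_nonneg (hnn _) (hnn _)) (sq_nonneg (a (k + 1))),
          mul_pos h1p h2p]
    constructor
    · intro k hk
      match k with
      | 0 => rw [hb0] at hk; norm_num at hk
      | j + 1 =>
        rw [hbs j] at hk
        have ha1 : a (j + 1) = 0 := by nlinarith [hnn (j + 1), hnn j, mul_nonneg hx (hnn j)]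
        have hxa : κ p * a j = 0 := by nlinarith [hnn (j + 1), mul_nonneg hx (hnn j)]
        have ha2 : a (j + 2) = 0 := ih.1 (j + 1) ha1
        rw [hbs (j + 1), ha2, ha1, mul_zero, add_zero]
    · intro k
      match k with
      | 0 =>
        rw [hb0, hbs 0, hbs 1]
        have h00 : a 0 = 1 := esymmOn_zero κ A
        have := ih.2 0
        rw [h00] at this ⊢
        nlinarith [hnn 1, hnn 2, sq_nonneg (κ p)]
      | j + 1 =>
        rw [hbs j, hbs (j + 1), hbs (j + 2)]
        have hA := ih.2 j
        have hB := ih.2 (j + 1)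
        have hC := lc4 j
        nlinarith [mul_nonneg hx (sub_nonneg.mpr hC), mul_nonneg (mul_nonneg hx hx) (sub_nonneg.mpr hA)]

/-- The `k`-th elementary symmetric polynomial of `κ : Fin n → ℝ`. -/
noncomputable def esymm (n k : ℕ) (κ : Fin n → ℝ) : ℝ :=
  ∑ s ∈ Finset.univ.powersetCard k, ∏ i ∈ s, κ i

/-- `σ_k(κ|p)`: elementary symmetric polynomial with the `p`-th entry deleted. -/
noncomputable def esymmDel (n k : ℕ) (κ : Fin n → ℝ) (p : Fin n) : ℝ :=
  ∑ s ∈ (Finset.univ.erase p).powersetCard k, ∏ i ∈ s, κ i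

/-- `σ_k(κ|pq)`: elementary symmetric polynomial with the `p`-th and `q`-th entries deleted. -/
noncomputable def esymmDel2 (n k : ℕ) (κ : Fin n → ℝ) (p q : Fin n) : ℝ :=
  ∑ s ∈ ((Finset.univ.erase p).erase q).powersetCard k, ∏ i ∈ s, κ i

/-- Identity and nonnegativity for the quadratic expression in deleted symmetric functions. -/
theorem esymm_quadratic_identity (n l : ℕ) (hl : 2 ≤ l) (hln : l ≤ n)
    (κ : Fin n → ℝ) (p q : Fin n) (hpq : p ≠ q) :
    (esymmDel n (l - 1) κ p * esymmDel n (l - 1) κ q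
        - esymm n l κ * esymmDel2 n (l - 2) κ p q
      = esymmDel2 n (l - 1) κ p q ^ 2
        - esymmDel2 n l κ p q * esymmDel2 n (l - 2) κ p q) ∧
    ((∀ i, 0 ≤ κ i) →
      0 ≤ esymmDel n (l - 1) κ p * esymmDel n (l - 1) κ q
          - esymm n l κ * esymmDel2 n (l - 2) κ p q) := by
  obtain ⟨m, rfl⟩ : ∃ m, l = m + 2 := ⟨l - 2, by omega⟩
  have h1 : m + 2 - 1 = m + 1 := by omega
  have h2 : m + 2 - 2 = m := by omega
  rw [h1, h2]
  set S : Finset (Fin n) := (Finset.univ.erase p).erase q with hS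
  have a_def : ∀ k, esymmDel2 n k κ p q = esymmOn κ S k := fun k => rfl
  have hqS : q ∉ S := Finset.notMem_erase q _
  have hpS : p ∉ S := by simp [hS, hpq]
  have hq' : q ∈ Finset.univ.erase p := by simp [Ne.symm hpq]
  have hp' : p ∈ Finset.univ.erase q := by simp [hpq]
  have e1 : Finset.univ.erase p = insert q S := (Finset.insert_erase hq').symm
  have hScomm : (Finset.univ.erase q).erase p = S := by
    ext x
    simp only [hS, Finset.mem_erase]
    tauto
  have e2 : Finset.univ.erase q = insert p S := by
    rw [← hScomm]
    exact (Finset.insert_erase hp').symm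
  have hpu : p ∉ Finset.univ.erase p := Finset.notMem_erase p _
  have eu : (Finset.univ : Finset (Fin n)) = insert p (Finset.univ.erase p) :=
    (Finset.insert_erase (Finset.mem_univ p)).symm
  have dp : esymmDel n (m + 1) κ p = esymmOn κ S (m + 1) + κ q * esymmOn κ S m := by
    show esymmOn κ (Finset.univ.erase p) (m + 1) = _
    rw [e1, esymmOn_insert κ hqS]
  have dq : esymmDel n (m + 1) κ q = esymmOn κ S (m + 1) + κ p * esymmOn κ S m := by
    show esymmOn κ (Finset.univ.erase q) (m + 1) = _
    rw [e2, esymmOn_insert κ hpS]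
  have de : esymm n (m + 2) κ
      = (esymmOn κ S (m + 2) + κ q * esymmOn κ S (m + 1))
        + κ p * (esymmOn κ S (m + 1) + κ q * esymmOn κ S m) := by
    show esymmOn κ Finset.univ (m + 2) = _
    rw [eu, esymmOn_insert κ hpu, e1, esymmOn_insert κ hqS, esymmOn_insert κ hqS]
  have key : esymmDel n (m + 1) κ p * esymmDel n (m + 1) κ q
        - esymm n (m + 2) κ * esymmDel2 n m κ p q
      = esymmOn κ S (m + 1) ^ 2 - esymmOn κ S (m + 2) * esymmOn κ S m := by
    rw [dp, dq, de, a_def]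
    ring
  constructor
  · rw [key]; simp only [a_def]
  · intro hκ
    rw [key]
    have := (esymmOn_newton hκ S).2 m
    linarith
end

section
/- Newton's inequality: for any vector of n nonnegative reals and 1 ≤ s ≤ n−1, the normalized elementary symmetric functions p_s = σ_s / C(n,s) satisfy p_s² ≥ p_{s-1} · p_{s+1}. -/
open Finset

namespace NewtonAux

open Polynomial

def RR (p : ℝ[X]) : Prop := Multiset.card p.roots = p.natDegree

lemma natDegree_derivative_real (p : ℝ[X]) :
    (derivative p).natDegree = p.natDegree - 1 := by
  rcases Nat.eq_zero_or_pos p.natDegree with h | h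
  · rw [derivative_of_natDegree_zero h, natDegree_zero, h]
  · exact natDegree_eq_of_degree_eq_some (degree_derivative_eq p h)

lemma RR.deriv {p : ℝ[X]} (hp : RR p) : RR (derivative p) := by
  rcases Nat.eq_zero_or_pos p.natDegree with h | h
  · rw [RR, derivative_of_natDegree_zero h]; simp
  · refine le_antisymm (derivative p).card_roots' ?_
    have h1 := p.card_roots_le_derivative
    rw [hp] at h1
    rw [natDegree_derivative_real]
    omega

lemma RR.iterate {p : ℝ[X]} (hp : RR p) (k : ℕ) : RR (derivative^[k] p) := by
  induction k with
  | zero => simpa using hp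
  | succ k ih => rw [Function.iterate_succ_apply']; exact ih.deriv

lemma natDegree_iterate_derivative_real (p : ℝ[X]) (k : ℕ) :
    (derivative^[k] p).natDegree = p.natDegree - k := by
  induction k with
  | zero => simp
  | succ k ih =>
      rw [Function.iterate_succ_apply', natDegree_derivative_real, ih]
      omega

lemma reverse_multiset_prod (t : Multiset ℝ[X]) :
    t.prod.reverse = (t.map Polynomial.reverse).prod := by
  induction t using Multiset.induction with
  | empty => simp [Polynomial.reverse]
  | cons a t ih => simp [reverse_mul_of_domain, ih]

lemma reverse_X_sub_C {a : ℝ} (ha : a ≠ 0) :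
    (X - C a).reverse = C (-a) * (X - C a⁻¹) := by
  ext n
  rw [coeff_reverse, natDegree_X_sub_C]
  rcases n with _ | _ | n
  · rw [revAt_le (by norm_num)]
    simp [coeff_C_mul, coeff_sub, coeff_C, mul_inv_cancel₀ ha]
  · rw [revAt_le (by norm_num)]
    simp [coeff_C_mul, coeff_sub, coeff_C]
  · rw [revAt_eq_self_of_lt (by omega)]
    simp [coeff_C_mul, coeff_sub, coeff_C, coeff_X]

lemma RR.rev {p : ℝ[X]} (hp : RR p) (h0 : p.coeff 0 ≠ 0) :
    RR p.reverse ∧ p.reverse.natDegree = p.natDegree := by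
  have hp0 : p ≠ 0 := fun h => h0 (by simp [h])
  have hdeg : p.reverse.natDegree = p.natDegree := by
    rw [reverse_natDegree, natTrailingDegree_eq_zero_of_constantCoeff_ne_zero (by simpa using h0)]
    omega
  have hz : (0 : ℝ) ∉ p.roots := by
    intro hmem
    exact h0 (by rw [coeff_zero_eq_eval_zero]; exact (mem_roots hp0).mp hmem)
  have hfac := C_leadingCoeff_mul_prod_multiset_X_sub_C (p := p) hp
  have hrev : p.reverse =
      C (p.leadingCoeff * ((p.roots.map (fun a => -a)).prod)) *
        ((p.roots.map (fun a => a⁻¹)).map (fun a => X - C a)).prod := by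
    conv_lhs => rw [← hfac]
    rw [reverse_mul_of_domain, reverse_C, reverse_multiset_prod, Multiset.map_map,
      Multiset.map_map]
    simp only [Function.comp_def]
    have hcongr : (p.roots.map (fun a => ((X - C a).reverse : ℝ[X]))) =
        p.roots.map (fun a => C (-a) * (X - C a⁻¹)) := by
      apply Multiset.map_congr rfl
      intro a ha
      exact reverse_X_sub_C (fun h => hz (h ▸ ha))
    rw [hcongr, Multiset.prod_map_mul]
    have hCprod : (p.roots.map fun a => (C (-a) : ℝ[X])).prod
        = C ((p.roots.map (fun a => -a)).prod) := by
      rw [show (fun (a : ℝ) => (C (-a) : ℝ[X])) = (fun x => C x) ∘ (fun a => -a) from rfl,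
        ← Multiset.map_map]
      exact (map_multiset_prod (C : ℝ →+* ℝ[X]) _).symm
    rw [hCprod, ← mul_assoc, ← C_mul]
  have hc : p.leadingCoeff * ((p.roots.map (fun a => -a)).prod) ≠ 0 := by
    refine mul_ne_zero (leadingCoeff_ne_zero.mpr hp0) ?_
    intro hzero
    have hmem := Multiset.prod_eq_zero_iff.mp hzero
    rw [Multiset.mem_map] at hmem
    obtain ⟨a, ha, ha0⟩ := hmem
    exact hz (by rwa [show a = 0 by linarith [neg_eq_zero.mp ha0]] at ha)
  have hroots' : p.reverse.roots = p.roots.map (fun a => a⁻¹) := by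
    rw [hrev, roots_C_mul _ hc, roots_multiset_prod_X_sub_C]
  refine ⟨?_, hdeg⟩
  rw [RR, hroots', Multiset.card_map, hp, hdeg]

lemma quad_disc {p : ℝ[X]} (hp : RR p) (h2 : p.natDegree = 2) :
    4 * p.coeff 2 * p.coeff 0 ≤ p.coeff 1 ^ 2 := by
  have hp0 : p ≠ 0 := fun h => by simp [h] at h2
  have hfac := C_leadingCoeff_mul_prod_multiset_X_sub_C (p := p) hp
  obtain ⟨a, b, hab⟩ := Multiset.card_eq_two.mp (by rw [hp, h2])
  rw [hab] at hfac
  set c := p.leadingCoeff with hc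
  have hexp : p = C c * X ^ 2 - C (c * (a + b)) * X + C (c * (a * b)) := by
    rw [← hfac]
    simp only [Multiset.insert_eq_cons, Multiset.map_cons, Multiset.map_singleton, Multiset.prod_cons,
      Multiset.prod_singleton, C_mul, C_add]
    ring
  have e0 : p.coeff 0 = c * (a * b) := by rw [hexp]; simp
  have e1 : p.coeff 1 = -(c * (a + b)) := by
    rw [hexp]
    simp [coeff_X_pow, coeff_C]
  have e2 : p.coeff 2 = c := by
    rw [hexp]
    simp [coeff_X_pow, coeff_C]
  rw [e0, e1, e2]
  nlinarith [sq_nonneg (c * (a - b)), sq_nonneg c]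

end NewtonAux

open NewtonAux Polynomial in
lemma newton_key_pos (n s : ℕ) (hs : 1 ≤ s) (hsn : s + 1 ≤ n)
    (κ : Fin n → ℝ) (hκ : ∀ i, 0 < κ i) :
    esymm n (s - 1) κ * esymm n (s + 1) κ * ((n.choose s : ℝ)) ^ 2
      ≤ esymm n s κ ^ 2 * ((n.choose (s - 1) : ℝ) * (n.choose (s + 1) : ℝ)) := by
  have hσpos : ∀ k, k ≤ n → 0 < esymm n k κ := by
    intro k hk
    apply Finset.sum_pos
    · intro u _; exact Finset.prod_pos fun i _ => hκ i
    · exact Finset.powersetCard_nonempty.mpr (by simpa using hk)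
  set t : Multiset ℝ := (Finset.univ.val.map fun i => -κ i) with ht
  set f : ℝ[X] := (t.map fun a => X - C a).prod with hf
  have hcard : Multiset.card t = n := by simp [ht]
  have hdeg : f.natDegree = n := by
    rw [hf, natDegree_multiset_prod_X_sub_C_eq_card, hcard]
  have hRRf : RR f := by
    rw [RR, hf, roots_multiset_prod_X_sub_C, hcard,
      natDegree_multiset_prod_X_sub_C_eq_card, hcard]
  have hcoeff : ∀ k, k ≤ n → f.coeff k = esymm n (n - k) κ := by
    intro k hk
    have hft : f = ((Finset.univ.val.map κ).map fun r => X + C r).prod := by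
      rw [hf, ht, Multiset.map_map, Multiset.map_map]
      congr 1
      apply Multiset.map_congr rfl
      intro i _
      simp [sub_neg_eq_add]
    have hcards : Multiset.card (Finset.univ.val.map κ) = n := by simp
    rw [hft, Multiset.prod_X_add_C_coeff _ (le_of_le_of_eq hk hcards.symm), hcards,
      Finset.esymm_map_val]
    rfl
  set m : ℕ := n - s - 1 with hm
  set g : ℝ[X] := derivative^[m] f with hg
  have hgd : g.natDegree = s + 1 := by
    rw [hg, natDegree_iterate_derivative_real, hdeg]; omega
  have hgc : ∀ i, i ≤ s + 1 → g.coeff i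
      = (((i + m).descFactorial m : ℕ) : ℝ) * esymm n (s + 1 - i) κ := by
    intro i hi
    rw [hg, coeff_iterate_derivative, hcoeff (i + m) (by omega), nsmul_eq_mul,
      show n - (i + m) = s + 1 - i by omega]
  have hg0 : (0:ℝ) < g.coeff 0 := by
    rw [hgc 0 (by omega)]
    have h1 := hσpos (s+1) hsn
    have h2 : 0 < (((0 + m).descFactorial m : ℕ) : ℝ) := by
      rw [zero_add, Nat.descFactorial_self]
      exact_mod_cast Nat.factorial_pos m
    exact mul_pos h2 (by simpa using h1)
  obtain ⟨hRRh, hhd'⟩ := (hRRf.iterate m).rev (ne_of_gt hg0)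
  set h : ℝ[X] := g.reverse with hh
  have hhd : h.natDegree = s + 1 := hhd'.trans hgd
  have hhc : ∀ k, k ≤ s + 1 → h.coeff k = g.coeff (s + 1 - k) := by
    intro k hk
    rw [hh, coeff_reverse, hgd, revAt_le hk]
  set q : ℝ[X] := derivative^[s-1] h with hq
  have hqd : q.natDegree = 2 := by
    rw [hq, natDegree_iterate_derivative_real, hhd]; omega
  have hRRq : RR q := hRRh.iterate (s-1)
  have hqc : ∀ j, j ≤ 2 → q.coeff j
      = (((j + (s-1)).descFactorial (s-1) : ℕ) : ℝ) * g.coeff (s + 1 - (j + (s-1))) := by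
    intro j hj
    rw [hq, coeff_iterate_derivative, nsmul_eq_mul, hhc (j + (s-1)) (by omega)]
  have hdisc := quad_disc hRRq hqd
  -- named coefficients
  set σm := esymm n (s-1) κ with hσm
  set σ0 := esymm n s κ with hσ0
  set σp := esymm n (s+1) κ with hσp
  set dS0 : ℕ := (s-1).descFactorial (s-1) with hdS0
  set dS1 : ℕ := s.descFactorial (s-1) with hdS1
  set dS2 : ℕ := (s+1).descFactorial (s-1) with hdS2
  set dM0 : ℕ := (0+m).descFactorial m with hdM0
  set dM1 : ℕ := (1+m).descFactorial m with hdM1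
  set dM2 : ℕ := (2+m).descFactorial m with hdM2
  have hq0 : q.coeff 0 = (dS0 : ℝ) * ((dM2 : ℝ) * σm) := by
    rw [hqc 0 (by omega), zero_add, show s + 1 - (s - 1) = 2 by omega,
      hgc 2 (by omega), show s + 1 - 2 = s - 1 by omega]
  have hq1 : q.coeff 1 = (dS1 : ℝ) * ((dM1 : ℝ) * σ0) := by
    rw [hqc 1 (by omega), show 1 + (s-1) = s by omega, show s + 1 - s = 1 by omega,
      hgc 1 (by omega), show s + 1 - 1 = s by omega]
  have hq2 : q.coeff 2 = (dS2 : ℝ) * ((dM0 : ℝ) * σp) := by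
    rw [hqc 2 (by omega), show 2 + (s-1) = s + 1 by omega, show s+1 - (s+1) = 0 by omega,
      hgc 0 (by omega), show s + 1 - 0 = s + 1 by omega]
  rw [hq0, hq1, hq2] at hdisc
  -- factorial facts
  have f1 : dS1 = s.factorial := by
    have hle : s - 1 ≤ s := by omega
    have := Nat.factorial_mul_descFactorial hle
    rw [show s - (s-1) = 1 by omega] at this
    simpa [hdS1] using this
  have f2 : dM1 = (1+m).factorial := by
    have hle : m ≤ 1 + m := by omega
    have := Nat.factorial_mul_descFactorial hle
    rw [show 1 + m - m = 1 by omega] at this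
    simpa [hdM1] using this
  have f3 : 2 * dS2 = (s+1).factorial := by
    have hle : s - 1 ≤ s + 1 := by omega
    have := Nat.factorial_mul_descFactorial hle
    rw [show s + 1 - (s-1) = 2 by omega] at this
    simpa [hdS2, Nat.factorial] using this
  have f4 : dM0 = m.factorial := by rw [hdM0, zero_add, Nat.descFactorial_self]
  have f5 : dS0 = (s-1).factorial := Nat.descFactorial_self _
  have f6 : 2 * dM2 = (2+m).factorial := by
    have hle : m ≤ 2 + m := by omega
    have := Nat.factorial_mul_descFactorial hle
    rw [show 2 + m - m = 2 by omega] at this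
    simpa [hdM2, Nat.factorial] using this
  have c1 : n.choose (s-1) * (s-1).factorial * (2+m).factorial = n.factorial := by
    have := Nat.choose_mul_factorial_mul_factorial (show s-1 ≤ n by omega)
    rwa [show n - (s-1) = 2+m by omega] at this
  have c2 : n.choose s * s.factorial * (1+m).factorial = n.factorial := by
    have := Nat.choose_mul_factorial_mul_factorial (show s ≤ n by omega)
    rwa [show n - s = 1+m by omega] at this
  have c3 : n.choose (s+1) * (s+1).factorial * m.factorial = n.factorial := by
    have := Nat.choose_mul_factorial_mul_factorial (show s+1 ≤ n by omega)
    rwa [show n - (s+1) = m by omega] at this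
  have NID : (dS1 * dM1)^2 * (n.choose s)^2
      = 4 * ((dS2 * dM0) * (dS0 * dM2)) * (n.choose (s-1) * n.choose (s+1)) := by
    calc (dS1 * dM1)^2 * (n.choose s)^2
        = (n.choose s * dS1 * dM1)^2 := by ring
      _ = (n.factorial)^2 := by rw [f1, f2, c2]
      _ = (n.choose (s+1) * (s+1).factorial * m.factorial)
            * (n.choose (s-1) * (s-1).factorial * (2+m).factorial) := by rw [c3, c1]; ring
      _ = ((2 * dS2) * dM0 * ((2 * dM2) * dS0)) * (n.choose (s-1) * n.choose (s+1)) := by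
            rw [f3, f4, f5, f6]; ring
      _ = 4 * ((dS2 * dM0) * (dS0 * dM2)) * (n.choose (s-1) * n.choose (s+1)) := by ring
  have NIDR : ((dS1:ℝ) * (dM1:ℝ))^2 * ((n.choose s : ℝ))^2
      = 4 * (((dS2:ℝ) * (dM0:ℝ)) * ((dS0:ℝ) * (dM2:ℝ)))
        * ((n.choose (s-1) : ℝ) * (n.choose (s+1) : ℝ)) := by
    exact_mod_cast NID
  have ha1pos : (0:ℝ) < ((dS1:ℝ) * (dM1:ℝ)) := by
    have h1 : 0 < dS1 := by rw [f1]; exact Nat.factorial_pos _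
    have h2 : 0 < dM1 := by rw [f2]; exact Nat.factorial_pos _
    positivity
  have hCC : (0:ℝ) ≤ (n.choose (s-1) : ℝ) * (n.choose (s+1) : ℝ) := by positivity
  have main : ((dS1:ℝ) * (dM1:ℝ))^2 * (σm * σp * ((n.choose s:ℝ))^2)
      ≤ ((dS1:ℝ) * (dM1:ℝ))^2 * (σ0^2 * ((n.choose (s-1):ℝ) * (n.choose (s+1):ℝ))) := by
    calc ((dS1:ℝ) * (dM1:ℝ))^2 * (σm * σp * ((n.choose s:ℝ))^2)
        = (((dS1:ℝ) * (dM1:ℝ))^2 * ((n.choose s:ℝ))^2) * (σm * σp) := by ring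
      _ = (4 * (((dS2:ℝ) * (dM0:ℝ)) * ((dS0:ℝ) * (dM2:ℝ)))
            * ((n.choose (s-1) : ℝ) * (n.choose (s+1) : ℝ))) * (σm * σp) := by rw [NIDR]
      _ = ((n.choose (s-1) : ℝ) * (n.choose (s+1) : ℝ))
            * (4 * ((dS2:ℝ) * ((dM0:ℝ) * σp)) * ((dS0:ℝ) * ((dM2:ℝ) * σm))) := by ring
      _ ≤ ((n.choose (s-1) : ℝ) * (n.choose (s+1) : ℝ))
            * (((dS1:ℝ) * ((dM1:ℝ) * σ0))^2) := by
              exact mul_le_mul_of_nonneg_left hdisc hCC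
      _ = ((dS1:ℝ) * (dM1:ℝ))^2 * (σ0^2 * ((n.choose (s-1):ℝ) * (n.choose (s+1):ℝ))) := by
              ring
  exact le_of_mul_le_mul_left main (by positivity)

/-- Newton's inequality for the normalized elementary symmetric functions. -/
theorem newton_inequality (n s : ℕ) (hs : 1 ≤ s) (hsn : s + 1 ≤ n)
    (κ : Fin n → ℝ) (h : ∀ i, 0 ≤ κ i) :
    (esymm n (s - 1) κ / (n.choose (s - 1))) * (esymm n (s + 1) κ / (n.choose (s + 1)))
      ≤ (esymm n s κ / (n.choose s)) ^ 2 := by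
  have hC : (0:ℝ) < (n.choose s : ℝ) := by
    exact_mod_cast Nat.choose_pos (show s ≤ n by omega)
  have hCm : (0:ℝ) < (n.choose (s-1) : ℝ) := by
    exact_mod_cast Nat.choose_pos (show s - 1 ≤ n by omega)
  have hCp : (0:ℝ) < (n.choose (s+1) : ℝ) := by
    exact_mod_cast Nat.choose_pos hsn
  have cont : ∀ k : ℕ, Continuous fun t : ℝ => esymm n k (fun i => κ i + t) := by
    intro k
    unfold esymm
    exact continuous_finset_sum _ fun u _ => continuous_finset_prod _ fun i _ =>
      (continuous_const.add continuous_id)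
  have key : esymm n (s-1) κ * esymm n (s+1) κ * ((n.choose s : ℝ))^2
      ≤ esymm n s κ ^ 2 * ((n.choose (s-1) : ℝ) * (n.choose (s+1) : ℝ)) := by
    have hL : Filter.Tendsto
        (fun t : ℝ => esymm n (s-1) (fun i => κ i + t) * esymm n (s+1) (fun i => κ i + t)
          * ((n.choose s : ℝ))^2)
        (nhdsWithin 0 (Set.Ioi 0))
        (nhds (esymm n (s-1) κ * esymm n (s+1) κ * ((n.choose s:ℝ))^2)) := by
      have hcont : Continuous (fun t : ℝ => esymm n (s-1) (fun i => κ i + t)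
          * esymm n (s+1) (fun i => κ i + t) * ((n.choose s : ℝ))^2) :=
        ((cont (s-1)).mul (cont (s+1))).mul continuous_const
      have h0 := hcont.tendsto 0
      simp only [add_zero] at h0
      exact h0.mono_left nhdsWithin_le_nhds
    have hR : Filter.Tendsto
        (fun t : ℝ => esymm n s (fun i => κ i + t) ^ 2
          * ((n.choose (s-1) : ℝ) * (n.choose (s+1) : ℝ)))
        (nhdsWithin 0 (Set.Ioi 0))
        (nhds (esymm n s κ ^ 2 * ((n.choose (s-1):ℝ) * (n.choose (s+1):ℝ)))) := by
      have hcont : Continuous (fun t : ℝ => esymm n s (fun i => κ i + t) ^ 2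
          * ((n.choose (s-1) : ℝ) * (n.choose (s+1) : ℝ))) :=
        ((cont s).pow 2).mul continuous_const
      have h0 := hcont.tendsto 0
      simp only [add_zero] at h0
      exact h0.mono_left nhdsWithin_le_nhds
    refine le_of_tendsto_of_tendsto hL hR ?_
    filter_upwards [self_mem_nhdsWithin] with t ht
    exact newton_key_pos n s hs hsn _ (fun i => add_pos_of_nonneg_of_pos (h i) ht)
  rw [div_mul_div_comm, div_pow, div_le_div_iff₀ (by positivity) (by positivity)]
  exact key
end

section
/- If κ = (κ_1, ..., κ_n) satisfies κ_1 ≥ κ_2 ≥ ... ≥ κ_n > 0 (so κ lies in the positive cone) and σ_k(κ) ≥ c > 0 with σ_k(κ) ≤ C_1 for bounds c, C_1 > 0, then κ_1 ≤ C · σ_{k-1}(κ|1) · κ_1², i.e. σ_{k-1}(κ|1) · κ_1 ≥ 1/C, for a constant C depending only on n, k, c, C_1. -/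
open Finset

/-- Key lower bound: σ_{k-1}(κ|1) · κ₁ ≥ 1/C (Lemma 3.1 of Chou–Wang). -/
theorem key_lower_bound (n k : ℕ) (hk : 1 ≤ k) (hkn : k ≤ n)
    (c C₁ : ℝ) (hc : 0 < c) (hC₁ : 0 < C₁) :
    ∃ C : ℝ, 0 < C ∧ ∀ κ : Fin n → ℝ, (∀ i, 0 < κ i) →
      (∀ i j : Fin n, i ≤ j → κ j ≤ κ i) →
      c ≤ esymm n k κ → esymm n k κ ≤ C₁ →
      1 / C ≤ esymmDel n (k - 1) κ ⟨0, by omega⟩ * κ ⟨0, by omega⟩ := by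
  have hchoose : 0 < (n.choose k : ℝ) := by exact_mod_cast Nat.choose_pos hkn
  refine ⟨(n.choose k : ℝ) / c, div_pos hchoose hc, ?_⟩
  intro κ hpos hmono hlow _
  have hn : 0 < n := by omega
  set p0 : Fin n := ⟨0, by omega⟩ with hp0
  set D := esymmDel n (k - 1) κ p0 with hD
  have hDnonneg : 0 ≤ D := by
    apply Finset.sum_nonneg
    intro s _
    exact Finset.prod_nonneg fun i _ => (hpos i).le
  have hle : ∀ t : Finset (Fin n), t ⊆ Finset.univ.erase p0 → t.card = k - 1 →
      ∏ i ∈ t, κ i ≤ D := by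
    intro t hsub hcard
    apply Finset.single_le_sum (f := fun u => ∏ i ∈ u, κ i)
      (fun u _ => Finset.prod_nonneg fun i _ => (hpos i).le)
    rw [Finset.mem_powersetCard]
    exact ⟨hsub, hcard⟩
  have hterm : ∀ s ∈ Finset.univ.powersetCard k, ∏ i ∈ s, κ i ≤ κ p0 * D := by
    intro s hs
    rw [Finset.mem_powersetCard] at hs
    obtain ⟨hsub, hcard⟩ := hs
    by_cases hmem : p0 ∈ s
    · rw [← Finset.mul_prod_erase s κ hmem]
      refine mul_le_mul_of_nonneg_left ?_ (hpos p0).le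
      apply hle
      · exact Finset.erase_subset_erase _ hsub
      · rw [Finset.card_erase_of_mem hmem, hcard]
    · have hne : s.Nonempty := by rw [← Finset.card_pos, hcard]; omega
      obtain ⟨j, hj⟩ := hne
      rw [← Finset.mul_prod_erase s κ hj]
      have hκ : κ j ≤ κ p0 := hmono p0 j (by rw [Fin.le_def]; exact Nat.zero_le _)
      have hP : ∏ i ∈ s.erase j, κ i ≤ D := by
        apply hle
        · intro i hi
          rw [Finset.mem_erase] at hi ⊢
          refine ⟨fun h => hmem (h ▸ hi.2), Finset.mem_univ i⟩
        · rw [Finset.card_erase_of_mem hj, hcard]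
      exact mul_le_mul hκ hP (Finset.prod_nonneg fun i _ => (hpos i).le) (hpos p0).le
  have hsum : esymm n k κ ≤ (n.choose k : ℝ) * (κ p0 * D) := by
    calc esymm n k κ ≤ ∑ _s ∈ Finset.univ.powersetCard k, κ p0 * D :=
          Finset.sum_le_sum hterm
      _ = (n.choose k : ℝ) * (κ p0 * D) := by
          rw [Finset.sum_const, Finset.card_powersetCard, Finset.card_univ,
            Fintype.card_fin, nsmul_eq_mul]
  have hc' : c ≤ (n.choose k : ℝ) * (κ p0 * D) := le_trans hlow hsum
  rw [one_div_div, div_le_iff₀ hchoose]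
  nlinarith
end

section
/- Let κ_1 ≥ κ_2 ≥ ... ≥ κ_n > 0 and suppose 0 < δ' < 1. If κ_{l+1} ≤ δ'·κ_1 for some 1 ≤ l ≤ k−1 (with 2 ≤ k ≤ n), then σ_k(κ)/κ_1 ≤ C·δ'·σ_{k-1}(κ|p) for every p > l, where C depends only on n and k. -/
open Finset

/-- If κ_{l+1} ≤ δ'·κ₁ then σ_k(κ)/κ₁ ≤ C·δ'·σ_{k-1}(κ|p) for all p > l. -/
theorem sigma_ratio_bound (n k : ℕ) (hk2 : 2 ≤ k) (hkn : k ≤ n) :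
    ∃ C : ℝ, 0 < C ∧ ∀ κ : Fin n → ℝ, (∀ i, 0 < κ i) →
      (∀ i j : Fin n, i ≤ j → κ j ≤ κ i) →
      ∀ l : ℕ, 1 ≤ l → l ≤ k - 1 →
      ∀ δ' : ℝ, 0 < δ' → δ' < 1 →
      ∀ hln : l < n, κ ⟨l, hln⟩ ≤ δ' * κ ⟨0, by omega⟩ →
      ∀ p : Fin n, l ≤ p.val →
      esymm n k κ / κ ⟨0, by omega⟩ ≤ C * δ' * esymmDel n (k - 1) κ p := by
  classical
  refine ⟨n, by exact_mod_cast Nat.pos_of_ne_zero (by omega), ?_⟩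
  intro κ hpos hmono l hl1 hlk δ' hδ0 hδ1 hln hκl p hlp
  set κ0 := κ ⟨0, by omega⟩ with hκ0def
  have hκ0 : 0 < κ0 := hpos _
  set A := (Finset.univ : Finset (Fin n)).powersetCard k with hA
  set B := ((Finset.univ : Finset (Fin n)).erase p).powersetCard (k - 1) with hB
  have hBnonneg : 0 ≤ esymmDel n (k-1) κ p :=
    Finset.sum_nonneg fun s _ => Finset.prod_nonneg fun i _ => (hpos i).le
  -- the choice function
  set Φ : Finset (Fin n) → Fin n × Finset (Fin n) := fun s =>
    if h : p ∈ s ∨ ¬ s.Nonempty then (p, s.erase p)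
    else (s.max' (not_not.mp (fun hn => h (Or.inr hn))),
          s.erase (s.max' (not_not.mp (fun hn => h (Or.inr hn))))) with hΦ
  have hAfact : ∀ s ∈ A, s.card = k := by
    intro s hs
    exact (Finset.mem_powersetCard.mp hs).2
  have hAne : ∀ s ∈ A, s.Nonempty := by
    intro s hs
    rw [← Finset.card_pos, hAfact s hs]; omega
  -- basic facts about Φ
  have hmem : ∀ s ∈ A, (Φ s).1 ∈ s ∧ (Φ s).2 = s.erase (Φ s).1 := by
    intro s hs
    by_cases hp : p ∈ s
    · simp only [hΦ, dif_pos (Or.inl hp)]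
      exact ⟨hp, trivial⟩
    · have hne := hAne s hs
      have : ¬ (p ∈ s ∨ ¬ s.Nonempty) := by
        push_neg; exact ⟨hp, hne⟩
      simp only [hΦ, dif_neg this]
      exact ⟨s.max'_mem _, trivial⟩
  have hsmall : ∀ s ∈ A, κ (Φ s).1 ≤ δ' * κ0 := by
    intro s hs
    have hlp' : ∀ q : Fin n, l ≤ q.val → κ q ≤ δ' * κ0 := by
      intro q hq
      refine le_trans (hmono ⟨l, hln⟩ q ?_) hκl
      exact hq
    by_cases hp : p ∈ s
    · simp only [hΦ, dif_pos (Or.inl hp)]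
      exact hlp' p hlp
    · have hne := hAne s hs
      have hcond : ¬ (p ∈ s ∨ ¬ s.Nonempty) := by push_neg; exact ⟨hp, hne⟩
      simp only [hΦ, dif_neg hcond]
      -- there is an element of s with val ≥ l
      obtain ⟨a, ha, hal⟩ : ∃ a ∈ s, l ≤ a.val := by
        by_contra hcon
        push_neg at hcon
        have hsub : s.image Fin.val ⊆ Finset.range l := by
          intro x hx
          obtain ⟨a, ha, rfl⟩ := Finset.mem_image.mp hx
          exact Finset.mem_range.mpr (hcon a ha)
        have hcard := Finset.card_le_card hsub
        rw [Finset.card_image_of_injective s Fin.val_injective,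
            hAfact s hs, Finset.card_range] at hcard
        omega
      refine le_trans (hmono a _ (Finset.le_max' s a ha)) (hlp' a hal)
  have hΦmem : ∀ s ∈ A, Φ s ∈ (Finset.univ : Finset (Fin n)) ×ˢ B := by
    intro s hs
    obtain ⟨h1, h2⟩ := hmem s hs
    refine Finset.mem_product.mpr ⟨Finset.mem_univ _, ?_⟩
    rw [hB, Finset.mem_powersetCard]
    constructor
    · intro x hx
      rw [h2, Finset.mem_erase] at hx
      refine Finset.mem_erase.mpr ⟨?_, Finset.mem_univ _⟩
      by_cases hp : p ∈ s
      · have : (Φ s).1 = p := by simp [hΦ, dif_pos (Or.inl hp)]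
        rw [this] at hx; exact hx.1
      · intro hxp; exact hp (hxp ▸ hx.2)
    · rw [h2, Finset.card_erase_of_mem h1, hAfact s hs]
  have hΦinj : Set.InjOn Φ A := by
    intro s hs s' hs' heq
    obtain ⟨h1, h2⟩ := hmem s hs
    obtain ⟨h1', h2'⟩ := hmem s' hs'
    have : s = insert (Φ s).1 (Φ s).2 := by rw [h2, Finset.insert_erase h1]
    rw [this, heq, h2', Finset.insert_erase h1']
  -- main estimate
  have key : esymm n k κ ≤ δ' * κ0 * ((n : ℝ) * esymmDel n (k-1) κ p) := by
    have step1 : esymm n k κ ≤ ∑ s ∈ A, δ' * κ0 * ∏ i ∈ (Φ s).2, κ i := by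
      refine Finset.sum_le_sum ?_
      intro s hs
      obtain ⟨h1, h2⟩ := hmem s hs
      have := Finset.mul_prod_erase s κ h1
      rw [h2, ← this]
      have hprodnn : 0 ≤ ∏ i ∈ s.erase (Φ s).1, κ i :=
        Finset.prod_nonneg fun i _ => (hpos i).le
      exact mul_le_mul_of_nonneg_right (hsmall s hs) hprodnn
    have step2 : ∑ s ∈ A, ∏ i ∈ (Φ s).2, κ i
        ≤ ∑ x ∈ (Finset.univ : Finset (Fin n)) ×ˢ B, ∏ i ∈ x.2, κ i := by
      have him : ∑ x ∈ A.image Φ, (fun x : Fin n × Finset (Fin n) => ∏ i ∈ x.2, κ i) x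
          = ∑ s ∈ A, (fun x : Fin n × Finset (Fin n) => ∏ i ∈ x.2, κ i) (Φ s) :=
        Finset.sum_image (fun s hs s' hs' h => hΦinj hs hs' h)
      simp only at him
      rw [← him]
      refine Finset.sum_le_sum_of_subset_of_nonneg ?_ ?_
      · intro x hx
        obtain ⟨s, hs, rfl⟩ := Finset.mem_image.mp hx
        exact hΦmem s hs
      · intro x _ _
        exact Finset.prod_nonneg fun i _ => (hpos i).le
    have step3 : ∑ x ∈ (Finset.univ : Finset (Fin n)) ×ˢ B, ∏ i ∈ x.2, κ i
        = (n : ℝ) * esymmDel n (k-1) κ p := by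
      rw [Finset.sum_product]
      simp [esymmDel, ← hB, Finset.sum_const, Finset.card_univ]
    calc esymm n k κ ≤ ∑ s ∈ A, δ' * κ0 * ∏ i ∈ (Φ s).2, κ i := step1
      _ = δ' * κ0 * ∑ s ∈ A, ∏ i ∈ (Φ s).2, κ i := by rw [Finset.mul_sum]
      _ ≤ δ' * κ0 * ((n : ℝ) * esymmDel n (k-1) κ p) := by
          refine mul_le_mul_of_nonneg_left ?_ (by positivity)
          rw [← step3]; exact step2
  rw [div_le_iff₀ hκ0]
  calc esymm n k κ ≤ δ' * κ0 * ((n : ℝ) * esymmDel n (k-1) κ p) := key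
    _ = (n : ℝ) * δ' * esymmDel n (k-1) κ p * κ0 := by ring
end

section
/- Let κ_1 ≥ κ_2 ≥ ... ≥ κ_n > 0, let 1 ≤ l ≤ k−1 ≤ n−1, and let 0 < δ < 1/2 with κ_l ≥ δ·κ_1. Then for every p > l, σ_{l-1}(κ|p)/σ_l(κ) ≤ C/(δ·κ_1) for a constant C depending only on n and l. -/
open Finset

lemma fin_strictMono_le {m n : ℕ} (f : Fin m → Fin n) (hf : StrictMono f) :
    ∀ j : Fin m, (j : ℕ) ≤ (f j : ℕ) := by
  have : ∀ v : ℕ, ∀ h : v < m, v ≤ (f ⟨v, h⟩ : ℕ) := by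
    intro v
    induction v with
    | zero => intro h; exact Nat.zero_le _
    | succ w ih =>
      intro h
      have hw : w < m := Nat.lt_of_succ_lt h
      have h2 : (f ⟨w, hw⟩ : ℕ) < (f ⟨w + 1, h⟩ : ℕ) := hf (by simp [Fin.lt_def])
      have := ih hw
      omega
  exact fun j => this j.val j.isLt

lemma prod_card_le {n m : ℕ} (hmn : m ≤ n) (κ : Fin n → ℝ)
    (hpos : ∀ i, 0 < κ i) (hmono : ∀ i j : Fin n, i ≤ j → κ j ≤ κ i)
    (s : Finset (Fin n)) (hs : s.card = m) :
    ∏ i ∈ s, κ i ≤ ∏ j : Fin m, κ (Fin.castLE hmn j) := by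
  have hrange : Finset.image (s.orderEmbOfFin hs) Finset.univ = s := by
    have hr := Finset.range_orderEmbOfFin s hs
    ext x
    simp only [Finset.mem_image, Finset.mem_univ, true_and]
    constructor
    · rintro ⟨a, rfl⟩
      exact Finset.orderEmbOfFin_mem s hs a
    · intro hx
      obtain ⟨a, ha⟩ := (hr ▸ hx : x ∈ Set.range (s.orderEmbOfFin hs))
      exact ⟨a, ha⟩
  have heq : ∏ x ∈ Finset.image (fun a => s.orderEmbOfFin hs a) Finset.univ, κ x
      = ∏ j : Fin m, κ (s.orderEmbOfFin hs j) :=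
    Finset.prod_image (fun a _ b _ h => (s.orderEmbOfFin hs).injective h)
  rw [hrange] at heq
  rw [heq]
  apply Finset.prod_le_prod (fun j _ => (hpos _).le)
  intro j _
  apply hmono
  exact Fin.mk_le_of_le_val (fin_strictMono_le _ (s.orderEmbOfFin hs).strictMono j)

/-- If κ_l ≥ δ·κ₁ then σ_{l-1}(κ|p)/σ_l(κ) ≤ C/(δ·κ₁) for p > l. -/
theorem sigma_l_ratio_bound (n l : ℕ) (hl : 1 ≤ l) :
    ∃ C : ℝ, 0 < C ∧ ∀ (k : ℕ) (hlk : l ≤ k - 1) (hkn : k ≤ n),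
      ∀ κ : Fin n → ℝ, (∀ i, 0 < κ i) →
      (∀ i j : Fin n, i ≤ j → κ j ≤ κ i) →
      ∀ δ : ℝ, 0 < δ → δ < 1 / 2 →
      δ * κ ⟨0, by omega⟩ ≤ κ ⟨l - 1, by omega⟩ →
      ∀ p : Fin n, l ≤ p.val →
      esymmDel n (l - 1) κ p / esymm n l κ ≤ C / (δ * κ ⟨0, by omega⟩) := by
  refine ⟨2 ^ n, by positivity, ?_⟩
  intro k hlk hkn κ hpos hmono δ hδ0 hδhalf hδκ p hp
  set m := l - 1 with hm
  have hln : l ≤ n := by omega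
  have hmn : m ≤ n := by omega
  have hm1 : m + 1 = l := by omega
  have hm1n : m + 1 ≤ n := by omega
  set κ₀ := κ ⟨0, by omega⟩ with hκ₀
  have hκ₀pos : 0 < κ₀ := hpos _
  set P := ∏ j : Fin m, κ (Fin.castLE hmn j) with hPdef
  have hP : 0 < P := Finset.prod_pos (fun j _ => hpos _)
  -- upper bound on esymmDel
  have hA : esymmDel n m κ p ≤ (2 ^ n : ℝ) * P := by
    have h1 : esymmDel n m κ p ≤
        ((Finset.univ.erase p).powersetCard m).card • P := by
      apply Finset.sum_le_card_nsmul
      intro s hs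
      exact prod_card_le hmn κ hpos hmono s (Finset.mem_powersetCard.mp hs).2
    have h2 : ((Finset.univ.erase p).powersetCard m).card ≤ 2 ^ n := by
      calc ((Finset.univ.erase p).powersetCard m).card
          ≤ (Finset.univ : Finset (Fin n)).powerset.card := by
            apply Finset.card_le_card
            intro s hs
            exact Finset.mem_powerset.mpr (Finset.subset_univ s)
        _ = 2 ^ n := by rw [Finset.card_powerset, Finset.card_univ, Fintype.card_fin]
    calc esymmDel n m κ p ≤ ((Finset.univ.erase p).powersetCard m).card • P := h1
      _ = (((Finset.univ.erase p).powersetCard m).card : ℝ) * P := nsmul_eq_mul _ _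
      _ ≤ (2 ^ n : ℝ) * P := by
          apply mul_le_mul_of_nonneg_right _ hP.le
          exact_mod_cast h2
  -- lower bound on esymm
  have hB : (δ * κ₀) * P ≤ esymm n l κ := by
    set T := Finset.image (Fin.castLE hm1n) Finset.univ with hT
    have hTcard : T.card = l := by
      rw [hT, Finset.card_image_of_injective _ (Fin.castLE_injective hm1n),
        Finset.card_univ, Fintype.card_fin]
      omega
    have hTprod : ∏ i ∈ T, κ i = ∏ j : Fin (m + 1), κ (Fin.castLE hm1n j) :=
      Finset.prod_image (fun a _ b _ h => Fin.castLE_injective hm1n h)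
    have hTle : ∏ i ∈ T, κ i ≤ esymm n l κ := by
      apply Finset.single_le_sum (f := fun s => ∏ i ∈ s, κ i)
        (fun s _ => Finset.prod_nonneg (fun i _ => (hpos i).le))
      exact Finset.mem_powersetCard.mpr ⟨Finset.subset_univ T, hTcard⟩
    have hsplit : ∏ j : Fin (m + 1), κ (Fin.castLE hm1n j)
        = P * κ ⟨m, by omega⟩ := by
      rw [Fin.prod_univ_castSucc]
      congr 1
    have hb : (δ * κ₀) * P ≤ ∏ i ∈ T, κ i := by
      rw [hTprod, hsplit]
      calc (δ * κ₀) * P ≤ κ ⟨m, by omega⟩ * P := by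
            apply mul_le_mul_of_nonneg_right _ hP.le
            exact hδκ
        _ = P * κ ⟨m, by omega⟩ := mul_comm _ _
    exact hb.trans hTle
  have hdP : 0 < (δ * κ₀) * P := by positivity
  have := div_le_div₀ (by positivity) hA hdP hB
  calc esymmDel n (l - 1) κ p / esymm n l κ
      ≤ ((2 : ℝ) ^ n * P) / ((δ * κ₀) * P) := this
    _ = (2 : ℝ) ^ n / (δ * κ₀) := mul_div_mul_right _ _ hP.ne'
end

section
/- The function (σ_k/σ_l)^{1/(k−l)} is concave on the Gårding cone Γ_k = {κ ∈ ℝ^n : σ_j(κ) > 0 for j = 1, ..., k}, for 0 ≤ l < k ≤ n. -/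
set_option linter.unusedSectionVars false

open Finset

variable {ι : Type*} [DecidableEq ι]

/-- elementary symmetric function over an arbitrary finset -/
noncomputable def es (A : Finset ι) (k : ℕ) (w : ι → ℝ) : ℝ :=
  ∑ s ∈ A.powersetCard k, ∏ i ∈ s, w i

lemma es_zero (A : Finset ι) (w : ι → ℝ) : es A 0 w = 1 := by
  simp [es]

lemma es_of_card_lt {A : Finset ι} {k : ℕ} (h : A.card < k) (w : ι → ℝ) : es A k w = 0 := by
  simp [es, Finset.powersetCard_eq_empty.2 h]

lemma es_insert {a : ι} {A : Finset ι} (ha : a ∉ A) (k : ℕ) (w : ι → ℝ) :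
    es (insert a A) (k+1) w = es A (k+1) w + w a * es A k w := by
  rw [es, Finset.powersetCard_succ_insert ha]
  have hdisj : Disjoint (A.powersetCard (k+1)) ((A.powersetCard k).image (insert a)) := by
    rw [Finset.disjoint_left]
    intro s hs hs'
    rw [Finset.mem_powersetCard] at hs
    rcases Finset.mem_image.1 hs' with ⟨t, _, rfl⟩
    exact ha (hs.1 (Finset.mem_insert_self a t))
  rw [Finset.sum_union hdisj]
  congr 1
  have hinj : ∀ s ∈ A.powersetCard k, ∀ t ∈ A.powersetCard k,
      insert a s = insert a t → s = t := by
    intro s hs t ht hst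
    rw [Finset.mem_powersetCard] at hs ht
    have hsa : a ∉ s := fun hc => ha (hs.1 hc)
    have hta : a ∉ t := fun hc => ha (ht.1 hc)
    have := congrArg (Finset.erase · a) hst
    simpa [Finset.erase_insert hsa, Finset.erase_insert hta] using this
  rw [Finset.sum_image hinj, es, Finset.mul_sum]
  apply Finset.sum_congr rfl
  intro s hs
  rw [Finset.mem_powersetCard] at hs
  rw [Finset.prod_insert (fun hc => ha (hs.1 hc))]

lemma es_erase {i : ι} {A : Finset ι} (hi : i ∈ A) (k : ℕ) (w : ι → ℝ) :
    es A (k+1) w = es (A.erase i) (k+1) w + w i * es (A.erase i) k w := by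
  conv_lhs => rw [← Finset.insert_erase hi]
  exact es_insert (Finset.notMem_erase i A) k w

lemma es_one (A : Finset ι) (w : ι → ℝ) : es A 1 w = ∑ i ∈ A, w i := by
  induction A using Finset.induction_on with
  | empty => rw [es_of_card_lt (by simp)]; simp
  | @insert a B ha IH =>
    rw [show (1:ℕ) = 0 + 1 from rfl, es_insert ha, es_zero, Finset.sum_insert ha,
      show (0+1 : ℕ) = 1 from rfl, IH]
    ring

lemma es_two_identity (A : Finset ι) (w : ι → ℝ) :
    es A 1 w ^ 2 = 2 * es A 2 w + ∑ i ∈ A, (w i)^2 := by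
  induction A using Finset.induction_on with
  | empty => rw [es_of_card_lt (by simp), es_of_card_lt (by simp)]; simp
  | @insert a B ha IH =>
    have h2 : es (insert a B) 2 w = es B 2 w + w a * es B 1 w := es_insert ha 1 w
    have h1 : es (insert a B) 1 w = es B 1 w + w a * es B 0 w := es_insert ha 0 w
    rw [h1, h2, es_zero, Finset.sum_insert ha]
    nlinarith [IH]

lemma powersetCard_erase_eq_filter (A : Finset ι) (i : ι) (k : ℕ) :
    (A.erase i).powersetCard k = (A.powersetCard k).filter (fun s => i ∉ s) := by
  ext s
  simp only [Finset.mem_powersetCard, Finset.mem_filter, Finset.subset_erase]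
  tauto

lemma sum_es_erase (A : Finset ι) (k : ℕ) (w : ι → ℝ) :
    ∑ i ∈ A, es (A.erase i) k w = ((A.card - k : ℕ) : ℝ) * es A k w := by
  rcases le_or_gt k A.card with hk | hk
  · have h : ∀ i ∈ A, es (A.erase i) k w =
        ∑ s ∈ A.powersetCard k, (if i ∉ s then (∏ j ∈ s, w j) else 0) := by
      intro i _
      rw [es, powersetCard_erase_eq_filter, Finset.sum_filter]
    rw [Finset.sum_congr rfl h, Finset.sum_comm]
    rw [es, Finset.mul_sum]
    apply Finset.sum_congr rfl
    intro s hs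
    rw [Finset.mem_powersetCard] at hs
    rw [← Finset.sum_filter]
    rw [Finset.sum_const, nsmul_eq_mul]
    have hcard : (A.filter (fun i => i ∉ s)).card = A.card - k := by
      have he : A.filter (fun i => i ∉ s) = A \ s := by
        ext x; simp [Finset.mem_sdiff]
      rw [he, Finset.card_sdiff_of_subset hs.1, hs.2]
    rw [hcard]
  · rw [es_of_card_lt hk, Nat.sub_eq_zero_of_le (le_of_lt hk)]
    simp only [Nat.cast_zero, zero_mul]
    apply Finset.sum_eq_zero
    intro i hi
    apply es_of_card_lt
    rw [Finset.card_erase_of_mem hi]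
    omega

lemma sum_mul_es_erase (A : Finset ι) (k : ℕ) (w : ι → ℝ) :
    ∑ i ∈ A, w i * es (A.erase i) k w = ((k:ℝ)+1) * es A (k+1) w := by
  have h1 : ∀ i ∈ A, w i * es (A.erase i) k w
      = es A (k+1) w - es (A.erase i) (k+1) w := by
    intro i hi
    rw [es_erase hi k w]; ring
  rw [Finset.sum_congr rfl h1, Finset.sum_sub_distrib, Finset.sum_const, sum_es_erase,
    nsmul_eq_mul]
  rcases le_or_gt (k+1) A.card with hk | hk
  · rw [Nat.cast_sub hk]
    push_cast
    ring
  · rw [es_of_card_lt hk]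
    ring

/-- key formula: (k+2) σ_{k+2} = σ₁ σ_{k+1} - ∑ wᵢ² σ_k(·|i) -/
lemma es_key_formula (A : Finset ι) (k : ℕ) (w : ι → ℝ) :
    ((k:ℝ)+2) * es A (k+2) w
      = es A 1 w * es A (k+1) w - ∑ i ∈ A, (w i)^2 * es (A.erase i) k w := by
  have h2 : ∑ i ∈ A, w i * es (A.erase i) (k+1) w = ((k:ℝ)+2) * es A (k+2) w := by
    rw [sum_mul_es_erase A (k+1) w]; push_cast; ring
  rw [← h2]
  have h3 : ∀ i ∈ A, w i * es (A.erase i) (k+1) w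
      = w i * es A (k+1) w - (w i)^2 * es (A.erase i) k w := by
    intro i hi
    rw [es_erase hi k w]; ring
  rw [Finset.sum_congr rfl h3, Finset.sum_sub_distrib, ← Finset.sum_mul, ← es_one]

/-- Newton-type inequality: (j+2) σ_{j+2} σ_j ≤ (j+1) σ_{j+1}², for arbitrary real weights. -/
lemma es_newton : ∀ (j : ℕ) (A : Finset ι) (w : ι → ℝ),
    ((j:ℝ)+2) * (es A (j+2) w * es A j w) ≤ ((j:ℝ)+1) * es A (j+1) w ^ 2 := by
  intro j
  induction j with
  | zero =>
    intro A w
    have h := es_two_identity A w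
    have hs : 0 ≤ ∑ i ∈ A, (w i)^2 := Finset.sum_nonneg (fun i _ => sq_nonneg _)
    rw [es_zero]
    push_cast
    nlinarith
  | succ j IH =>
    intro A w
    have hsum : (∑ i ∈ A, (w i)^2 * es (A.erase i) j w) * es A (j+2) w
        ≤ (∑ i ∈ A, (w i)^2 * es (A.erase i) (j+1) w) * es A (j+1) w := by
      rw [Finset.sum_mul, Finset.sum_mul]
      apply Finset.sum_le_sum
      intro i hi
      have tw : es (A.erase i) (j+2) w * es (A.erase i) j w ≤ es (A.erase i) (j+1) w ^ 2 := by
        have h := IH (A.erase i) w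
        rcases le_or_gt (es (A.erase i) (j+2) w * es (A.erase i) j w) 0 with h0 | h0
        · exact h0.trans (sq_nonneg _)
        · have hj : (0:ℝ) ≤ (j:ℝ) := Nat.cast_nonneg j
          nlinarith [sq_nonneg (es (A.erase i) (j+1) w)]
      have e1 : es A (j+2) w
          = es (A.erase i) (j+2) w + w i * es (A.erase i) (j+1) w := es_erase hi (j+1) w
      have e2 : es A (j+1) w
          = es (A.erase i) (j+1) w + w i * es (A.erase i) j w := es_erase hi j w
      rw [e1, e2]
      nlinarith [mul_le_mul_of_nonneg_left tw (sq_nonneg (w i))]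
    have hkey := es_key_formula A (j+1) w
    push_cast at hkey
    have F1 : ((j:ℝ)+1+2) * es A (j+3) w
        = es A 1 w * es A (j+2) w - ∑ i ∈ A, (w i)^2 * es (A.erase i) (j+1) w := hkey
    have F2 : ((j:ℝ)+2) * es A (j+2) w
        = es A 1 w * es A (j+1) w - ∑ i ∈ A, (w i)^2 * es (A.erase i) j w :=
      es_key_formula A j w
    have G1 : (((j:ℝ)+1+2) * es A (j+3) w) * es A (j+1) w
        = (es A 1 w * es A (j+2) w - ∑ i ∈ A, (w i)^2 * es (A.erase i) (j+1) w)
            * es A (j+1) w := by rw [F1]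
    have G2 : (((j:ℝ)+2) * es A (j+2) w) * es A (j+2) w
        = (es A 1 w * es A (j+1) w - ∑ i ∈ A, (w i)^2 * es (A.erase i) j w)
            * es A (j+2) w := by rw [F2]
    push_cast
    show ((j:ℝ)+1+2) * (es A (j+3) w * es A (j+1) w) ≤ ((j:ℝ)+1+1) * es A (j+2) w ^ 2
    nlinarith [G1, G2, hsum]

/-- weak Newton inequality -/
lemma es_newton_weak (j : ℕ) (A : Finset ι) (w : ι → ℝ) :
    es A (j+2) w * es A j w ≤ es A (j+1) w ^ 2 := by
  have h := es_newton j A w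
  rcases le_or_gt (es A (j+2) w * es A j w) 0 with h0 | h0
  · exact h0.trans (sq_nonneg _)
  · have hj : (0:ℝ) ≤ (j:ℝ) := Nat.cast_nonneg j
    nlinarith [sq_nonneg (es A (j+1) w)]

/-! ### The Gårding-type cone and the master induction -/

def Gam (A : Finset ι) (m : ℕ) : Set (ι → ℝ) := {w | ∀ j, 1 ≤ j → j ≤ m → 0 < es A j w}

lemma Gam_mono {A : Finset ι} {m m' : ℕ} (h : m' ≤ m) : Gam A m ⊆ Gam A m' :=
  fun w hw j h1 h2 => hw j h1 (h2.trans h)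

lemma Gam_card_le {A : Finset ι} {m : ℕ} {w : ι → ℝ} (hw : w ∈ Gam A m) : m ≤ A.card := by
  by_contra h
  push_neg at h
  have h2 := hw (A.card+1) (by omega) (by omega)
  rw [es_of_card_lt (by omega)] at h2
  exact lt_irrefl 0 h2

lemma es_pos_of_Gam {A : Finset ι} {m j : ℕ} {w : ι → ℝ} (hw : w ∈ Gam A m) (hj : j ≤ m) :
    0 < es A j w := by
  rcases Nat.eq_zero_or_pos j with rfl | h1
  · rw [es_zero]; norm_num
  · exact hw j h1 hj

lemma es_pos_of_pos {A : Finset ι} {k : ℕ} {w : ι → ℝ} (hpos : ∀ i ∈ A, 0 < w i)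
    (hk : k ≤ A.card) : 0 < es A k w := by
  apply Finset.sum_pos
  · intro s hs
    rw [Finset.mem_powersetCard] at hs
    exact Finset.prod_pos (fun i hi => hpos i (hs.1 hi))
  · exact Finset.powersetCard_nonempty.2 hk

lemma es_erase_pos_of_nonpos {A : Finset ι} {m : ℕ} {i₁ : ι} (hi₁ : i₁ ∈ A) {w : ι → ℝ}
    (hw : w ∈ Gam A m) (hneg : w i₁ ≤ 0) : ∀ j, j ≤ m → 0 < es (A.erase i₁) j w := by
  intro j
  induction j with
  | zero => intro _; rw [es_zero]; norm_num
  | succ j IHj =>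
    intro hj
    have h1 : es A (j+1) w = es (A.erase i₁) (j+1) w + w i₁ * es (A.erase i₁) j w :=
      es_erase hi₁ j w
    have hA : 0 < es A (j+1) w := hw (j+1) (by omega) hj
    have hprev : 0 < es (A.erase i₁) j w := IHj (by omega)
    nlinarith

lemma titu {u v a b c : ℝ} (ha : 0 < a) (hb : 0 < b) (hc : 0 < c) (habc : a + b ≤ c) :
    (u+v)^2/c ≤ u^2/a + v^2/b := by
  have h1 : (u+v)^2/c ≤ (u+v)^2/(a+b) := by
    gcongr
  have h2 : (u+v)^2/(a+b) ≤ u^2/a + v^2/b := by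
    rw [div_add_div _ _ (ne_of_gt ha) (ne_of_gt hb), div_le_div_iff₀ (by positivity) (by positivity)]
    nlinarith [sq_nonneg (u*b - v*a)]
  linarith

def DelP (r : ℕ) (A : Finset ι) : Prop :=
  ∀ w ∈ Gam A (r+1), ∀ i ∈ A, ∀ j, j ≤ r → 0 < es (A.erase i) j w

def MLP (r : ℕ) (A : Finset ι) : Prop :=
  ∀ x ∈ Gam A (r+1), ∀ y ∈ Gam A (r+1),
    es A (r+1) x / es A r x + es A (r+1) y / es A r y ≤ es A (r+1) (x+y) / es A r (x+y)

def ConvP (r : ℕ) (A : Finset ι) : Prop :=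
  ∀ x ∈ Gam A (r+1), ∀ y ∈ Gam A (r+1), x + y ∈ Gam A (r+1)

lemma master_body (r : ℕ) (A : Finset ι)
    (IH : ∀ r' (A' : Finset ι), r' + A'.card < r + A.card →
      DelP r' A' ∧ MLP r' A' ∧ ConvP r' A') :
    DelP r A ∧ MLP r A ∧ ConvP r A := by
  have del : DelP r A := by
    intro w hw i hi j hj
    rcases Nat.eq_zero_or_pos j with rfl | hj1
    · rw [es_zero]; norm_num
    have hr : 1 ≤ r := le_trans hj1 hj
    by_cases hpos : ∀ p ∈ A, 0 < w p
    · apply es_pos_of_pos (fun p hp => hpos p (Finset.mem_of_mem_erase hp))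
      have hcard : r + 1 ≤ A.card := Gam_card_le hw
      rw [Finset.card_erase_of_mem hi]; omega
    · push_neg at hpos
      obtain ⟨i₁, hi₁A, hi₁n⟩ := hpos
      have hz : ∀ j', j' ≤ r+1 → 0 < es (A.erase i₁) j' w :=
        es_erase_pos_of_nonpos hi₁A hw hi₁n
      have hzGam : w ∈ Gam (A.erase i₁) (r+1) := fun j' _ h2 => hz j' h2
      by_cases hii : i = i₁
      · subst hii; exact hz j (by omega)
      have hiA' : i ∈ A.erase i₁ := Finset.mem_erase.2 ⟨hii, hi⟩
      have hApos : 0 < A.card := Finset.card_pos.2 ⟨i₁, hi₁A⟩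
      have hcard' : (A.erase i₁).card = A.card - 1 := Finset.card_erase_of_mem hi₁A
      have delA' : DelP r (A.erase i₁) := (IH r (A.erase i₁) (by omega)).1
      have hB : ∀ j'', j'' ≤ r → 0 < es ((A.erase i₁).erase i) j'' w :=
        fun j'' h'' => delA' w hzGam i hiA' j'' h''
      rcases lt_or_eq_of_le hj with hjlt | rfl
      · obtain ⟨r', rfl⟩ : ∃ r', r = r'+1 := ⟨r-1, by omega⟩
        have del' : DelP r' A := (IH r' A (by omega)).1
        exact del' w (Gam_mono (by omega) hw) i hi j (by omega)
      · obtain ⟨r', rfl⟩ : ∃ r', j = r'+1 := ⟨j-1, by omega⟩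
        have hBe : (A.erase i).erase i₁ = (A.erase i₁).erase i := Finset.erase_right_comm
        have hi₁i : i₁ ∈ A.erase i := Finset.mem_erase.2 ⟨fun h => hii h.symm, hi₁A⟩
        have main : es (A.erase i) (r'+1) w
            = es ((A.erase i₁).erase i) (r'+1) w + w i₁ * es ((A.erase i₁).erase i) r' w := by
          rw [← hBe]; exact es_erase hi₁i r' w
        -- notation
        set a := es (A.erase i₁) (r'+1) w with hadef
        set b := es (A.erase i₁) (r'+2) w with hbdef
        set c := es ((A.erase i₁).erase i) r' w with hcdef
        set d := es ((A.erase i₁).erase i) (r'+1) w with hddef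
        have ha : 0 < a := hz (r'+1) (by omega)
        have hc : 0 < c := hB r' (by omega)
        have hd : 0 < d := hB (r'+1) (by omega)
        have h1 : 0 < b + w i₁ * a := by
          have e := es_erase hi₁A (r'+1) w
          have hA2 : 0 < es A (r'+2) w := hw (r'+2) (by omega) (by omega)
          rw [e] at hA2
          exact hA2
        have hstar : b * c ≤ a * d := by
          have e1 : b = es ((A.erase i₁).erase i) (r'+2) w + w i * d := es_erase hiA' (r'+1) w
          have e2 : a = d + w i * c := es_erase hiA' r' w
          have tw := es_newton_weak r' ((A.erase i₁).erase i) w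
          rw [e1, e2]
          nlinarith [tw]
        rw [main]
        nlinarith [mul_pos h1 hc, mul_pos ha hd]
  -- the quotient formula
  have formula : ∀ (r' : ℕ) (u : ι → ℝ), 0 < es A (r'+1) u →
      ((r':ℝ)+2) * (es A (r'+2) u / es A (r'+1) u)
        = es A 1 u - ∑ i ∈ A, (u i)^2 * (es (A.erase i) r' u / es A (r'+1) u) := by
    intro r' u hu
    have h := es_key_formula A r' u
    have hS : ∑ i ∈ A, (u i)^2 * (es (A.erase i) r' u / es A (r'+1) u)
        = (∑ i ∈ A, (u i)^2 * es (A.erase i) r' u) / es A (r'+1) u := by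
      rw [Finset.sum_div]
      exact Finset.sum_congr rfl (fun i _ => (mul_div_assoc _ _ _).symm)
    rw [hS, ← mul_div_assoc, h, sub_div, mul_div_assoc, div_self (ne_of_gt hu), mul_one]
  have ml : MLP r A := by
    rcases Nat.eq_zero_or_pos r with rfl | hr
    · intro x hx y hy
      simp only [zero_add, es_zero, div_one, es_one]
      apply le_of_eq
      rw [← Finset.sum_add_distrib]
      exact Finset.sum_congr rfl (fun i _ => rfl)
    · obtain ⟨r', rfl⟩ : ∃ r', r = r'+1 := ⟨r-1, by omega⟩
      intro x hx y hy
      have convIH : ConvP r' A := (IH r' A (by omega)).2.2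
      have hxy : x + y ∈ Gam A (r'+1) :=
        convIH x (Gam_mono (by omega) hx) y (Gam_mono (by omega) hy)
      have hEx : 0 < es A (r'+1) x := hx (r'+1) (by omega) (by omega)
      have hEy : 0 < es A (r'+1) y := hy (r'+1) (by omega) (by omega)
      have hExy : 0 < es A (r'+1) (x+y) := hxy (r'+1) (by omega) (by omega)
      have hterm : ∀ i ∈ A,
          ((x+y) i)^2 * (es (A.erase i) r' (x+y) / es A (r'+1) (x+y))
            ≤ (x i)^2 * (es (A.erase i) r' x / es A (r'+1) x)
              + (y i)^2 * (es (A.erase i) r' y / es A (r'+1) y) := by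
        intro i hi
        have hdx : 0 < es (A.erase i) r' x := del x hx i hi r' (by omega)
        have hdy : 0 < es (A.erase i) r' y := del y hy i hi r' (by omega)
        have hdxy : 0 < es (A.erase i) r' (x+y) :=
          (IH r' A (by omega)).1 (x+y) hxy i hi r' (le_refl _)
        have hex : 0 < es (A.erase i) (r'+1) x := del x hx i hi (r'+1) (le_refl _)
        have hey : 0 < es (A.erase i) (r'+1) y := del y hy i hi (r'+1) (le_refl _)
        have hcard2 : i ∈ A := hi
        have mlIH : MLP r' (A.erase i) := by
          refine (IH r' (A.erase i) ?_).2.1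
          rw [Finset.card_erase_of_mem hi]
          have : 0 < A.card := Finset.card_pos.2 ⟨i, hi⟩
          omega
        have hxG : x ∈ Gam (A.erase i) (r'+1) := fun j _ h2 => del x hx i hi j h2
        have hyG : y ∈ Gam (A.erase i) (r'+1) := fun j _ h2 => del y hy i hi j h2
        have hml' := mlIH x hxG y hyG
        -- T-quantities
        have hTx : es A (r'+1) x / es (A.erase i) r' x
            = x i + es (A.erase i) (r'+1) x / es (A.erase i) r' x := by
          rw [es_erase hi r' x]
          field_simp
          ring
        have hTy : es A (r'+1) y / es (A.erase i) r' y
            = y i + es (A.erase i) (r'+1) y / es (A.erase i) r' y := by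
          rw [es_erase hi r' y]
          field_simp
          ring
        have hTxy : es A (r'+1) (x+y) / es (A.erase i) r' (x+y)
            = (x i + y i) + es (A.erase i) (r'+1) (x+y) / es (A.erase i) r' (x+y) := by
          rw [es_erase hi r' (x+y)]
          have : (x+y) i = x i + y i := rfl
          rw [this]
          field_simp
          ring
        have hTxpos : 0 < es A (r'+1) x / es (A.erase i) r' x := div_pos hEx hdx
        have hTypos : 0 < es A (r'+1) y / es (A.erase i) r' y := div_pos hEy hdy
        have hTxypos : 0 < es A (r'+1) (x+y) / es (A.erase i) r' (x+y) := div_pos hExy hdxy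
        have hTsum : es A (r'+1) x / es (A.erase i) r' x + es A (r'+1) y / es (A.erase i) r' y
            ≤ es A (r'+1) (x+y) / es (A.erase i) r' (x+y) := by
          rw [hTx, hTy, hTxy]
          linarith [hml']
        have htitu := titu (u := x i) (v := y i) hTxpos hTypos hTxypos hTsum
        -- convert (u i)^2 / T to (u i)^2 * (d/E)
        have conv1 : ∀ (E d z : ℝ), 0 < E → 0 < d → z^2 / (E / d) = z^2 * (d / E) := by
          intro E d z hE hd
          rw [div_div_eq_mul_div, mul_div_assoc]
        rw [conv1 _ _ _ hEx hdx, conv1 _ _ _ hEy hdy, conv1 _ _ _ hExy hdxy] at htitu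
        have hxyi : (x+y) i = x i + y i := rfl
        rw [hxyi]
        exact htitu
      -- sum up
      have hsum := Finset.sum_le_sum hterm
      rw [Finset.sum_add_distrib] at hsum
      have f1 := formula r' x hEx
      have f2 := formula r' y hEy
      have f3 := formula r' (x+y) hExy
      have hes1 : es A 1 (x+y) = es A 1 x + es A 1 y := by
        rw [es_one, es_one, es_one, ← Finset.sum_add_distrib]
        exact Finset.sum_congr rfl (fun i _ => rfl)
      have hmain : ((r':ℝ)+2) * (es A (r'+2) x / es A (r'+1) x)
          + ((r':ℝ)+2) * (es A (r'+2) y / es A (r'+1) y)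
          ≤ ((r':ℝ)+2) * (es A (r'+2) (x+y) / es A (r'+1) (x+y)) := by
        rw [f1, f2, f3, hes1]
        linarith
      have hpos2 : (0:ℝ) < (r':ℝ)+2 := by positivity
      have := le_of_mul_le_mul_left (by linarith [hmain] :
        ((r':ℝ)+2) * (es A (r'+2) x / es A (r'+1) x + es A (r'+2) y / es A (r'+1) y)
          ≤ ((r':ℝ)+2) * (es A (r'+2) (x+y) / es A (r'+1) (x+y))) hpos2
      exact this
  have conv : ConvP r A := by
    intro x hx y hy j h1 hj
    rcases lt_or_eq_of_le hj with hlt | rfl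
    · obtain ⟨r', rfl⟩ : ∃ r', r = r'+1 := ⟨r-1, by omega⟩
      exact (IH r' A (by omega)).2.2 x (Gam_mono (by omega) hx) y (Gam_mono (by omega) hy)
        j h1 (by omega)
    · have hml := ml x hx y hy
      have hqx : 0 < es A (r+1) x / es A r x :=
        div_pos (es_pos_of_Gam hx (le_refl _)) (es_pos_of_Gam hx (by omega))
      have hqy : 0 < es A (r+1) y / es A r y :=
        div_pos (es_pos_of_Gam hy (le_refl _)) (es_pos_of_Gam hy (by omega))
      have hq : 0 < es A (r+1) (x+y) / es A r (x+y) := by linarith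
      have hden : 0 < es A r (x+y) := by
        rcases Nat.eq_zero_or_pos r with rfl | hr
        · rw [es_zero]; norm_num
        · obtain ⟨r', rfl⟩ : ∃ r', r = r'+1 := ⟨r-1, by omega⟩
          have hxy : x + y ∈ Gam A (r'+1) :=
            (IH r' A (by omega)).2.2 x (Gam_mono (by omega) hx) y (Gam_mono (by omega) hy)
          exact es_pos_of_Gam hxy (le_refl _)
      rcases div_pos_iff.1 hq with ⟨h, _⟩ | ⟨_, h⟩
      · exact h
      · linarith
  exact ⟨del, ml, conv⟩

theorem master (r : ℕ) (A : Finset ι) : DelP r A ∧ MLP r A ∧ ConvP r A := by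
  suffices h : ∀ (M r : ℕ) (A : Finset ι), r + A.card ≤ M → DelP r A ∧ MLP r A ∧ ConvP r A by
    exact h (r + A.card) r A (le_refl _)
  intro M
  induction M with
  | zero =>
    intro r A h
    exact master_body r A (fun r' A' h' => absurd h' (by omega))
  | succ M IHM =>
    intro r A h
    exact master_body r A (fun r' A' h' => IHM r' A' (by omega))

/-! ### Glue lemmas -/

lemma es_smul (A : Finset ι) (k : ℕ) (c : ℝ) (w : ι → ℝ) :
    es A k (c • w) = c^k * es A k w := by
  unfold es
  rw [Finset.mul_sum]
  apply Finset.sum_congr rfl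
  intro s hs
  rw [Finset.mem_powersetCard] at hs
  have : ∀ i ∈ s, (c • w) i = c * w i := fun i _ => rfl
  rw [Finset.prod_congr rfl this, Finset.prod_mul_distrib, Finset.prod_const, hs.2]

lemma Gam_smul {A : Finset ι} {m : ℕ} {c : ℝ} (hc : 0 < c) {w : ι → ℝ} (hw : w ∈ Gam A m) :
    c • w ∈ Gam A m := by
  intro j h1 h2
  rw [es_smul]
  exact mul_pos (pow_pos hc j) (hw j h1 h2)

lemma telescope_ratio (l k : ℕ) (hlk : l ≤ k) (f : ℕ → ℝ) (hf : ∀ j, j ≤ k → f j ≠ 0) :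
    ∏ j ∈ Finset.Ico l k, (f (j+1) / f j) = f k / f l := by
  induction k with
  | zero =>
    have : l = 0 := by omega
    subst this
    simp [div_self (hf 0 (le_refl _))]
  | succ k IHk =>
    rcases Nat.lt_or_ge l (k+1) with h | h
    · have hlk' : l ≤ k := by omega
      rw [Finset.prod_Ico_succ_top hlk', IHk hlk' (fun j hj => hf j (by omega))]
      have hk0 : f k ≠ 0 := hf k (by omega)
      rw [div_mul_div_comm, mul_comm (f l) (f k), mul_div_mul_left _ _ hk0]
    · have : l = k+1 := by omega
      subst this
      simp [div_self (hf (k+1) (le_refl _))]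

lemma mahler_ineq {β : Type*} (s : Finset β) (hne : s.Nonempty) (a b : β → ℝ)
    (ha : ∀ i ∈ s, 0 < a i) (hb : ∀ i ∈ s, 0 < b i) :
    (∏ i ∈ s, a i) ^ ((1:ℝ)/s.card) + (∏ i ∈ s, b i) ^ ((1:ℝ)/s.card)
      ≤ (∏ i ∈ s, (a i + b i)) ^ ((1:ℝ)/s.card) := by
  have hm : (0:ℝ) < s.card := by exact_mod_cast Finset.card_pos.2 hne
  set e : ℝ := (1:ℝ)/s.card with he
  have hw : ∑ _i ∈ s, e = 1 := by
    rw [Finset.sum_const, nsmul_eq_mul, he]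
    field_simp
  have hab : ∀ i ∈ s, 0 < a i + b i := fun i hi => by linarith [ha i hi, hb i hi]
  have A1 := Real.geom_mean_le_arith_mean_weighted s (fun _ => e)
    (fun i => a i / (a i + b i)) (fun i _ => by positivity) hw
    (fun i hi => le_of_lt (div_pos (ha i hi) (hab i hi)))
  have B1 := Real.geom_mean_le_arith_mean_weighted s (fun _ => e)
    (fun i => b i / (a i + b i)) (fun i _ => by positivity) hw
    (fun i hi => le_of_lt (div_pos (hb i hi) (hab i hi)))
  have hsum : ∑ i ∈ s, e * (a i / (a i + b i)) + ∑ i ∈ s, e * (b i / (a i + b i)) = 1 := by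
    rw [← Finset.sum_add_distrib]
    calc ∑ i ∈ s, (e * (a i / (a i + b i)) + e * (b i / (a i + b i)))
        = ∑ _i ∈ s, e := by
          apply Finset.sum_congr rfl
          intro i hi
          have h0 : a i + b i ≠ 0 := ne_of_gt (hab i hi)
          field_simp
      _ = 1 := hw
  have hPA : ∏ i ∈ s, (a i / (a i + b i)) ^ e
      = (∏ i ∈ s, a i) ^ e / (∏ i ∈ s, (a i + b i)) ^ e := by
    have h1 : ∀ i ∈ s, (a i / (a i + b i)) ^ e = (a i) ^ e / (a i + b i) ^ e :=
      fun i hi => Real.div_rpow (le_of_lt (ha i hi)) (le_of_lt (hab i hi)) e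
    rw [Finset.prod_congr rfl h1, Finset.prod_div_distrib,
      Real.finset_prod_rpow s a (fun i hi => le_of_lt (ha i hi)) e,
      Real.finset_prod_rpow s _ (fun i hi => le_of_lt (hab i hi)) e]
  have hPB : ∏ i ∈ s, (b i / (a i + b i)) ^ e
      = (∏ i ∈ s, b i) ^ e / (∏ i ∈ s, (a i + b i)) ^ e := by
    have h1 : ∀ i ∈ s, (b i / (a i + b i)) ^ e = (b i) ^ e / (a i + b i) ^ e :=
      fun i hi => Real.div_rpow (le_of_lt (hb i hi)) (le_of_lt (hab i hi)) e
    rw [Finset.prod_congr rfl h1, Finset.prod_div_distrib,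
      Real.finset_prod_rpow s b (fun i hi => le_of_lt (hb i hi)) e,
      Real.finset_prod_rpow s _ (fun i hi => le_of_lt (hab i hi)) e]
  rw [hPA] at A1
  rw [hPB] at B1
  have hRpos : 0 < (∏ i ∈ s, (a i + b i)) ^ e := by
    apply Real.rpow_pos_of_pos
    exact Finset.prod_pos hab
  have hfin : (∏ i ∈ s, a i) ^ e / (∏ i ∈ s, (a i + b i)) ^ e
      + (∏ i ∈ s, b i) ^ e / (∏ i ∈ s, (a i + b i)) ^ e ≤ 1 := by linarith
  rw [← add_div, div_le_one hRpos] at hfin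
  exact hfin

lemma ratio_prod {A : Finset ι} {l k : ℕ} (hlk : l ≤ k) {u : ι → ℝ} (hu : u ∈ Gam A k) :
    es A k u / es A l u = ∏ j ∈ Finset.Ico l k, (es A (j+1) u / es A j u) :=
  (telescope_ratio l k hlk (fun j => es A j u)
    (fun j hj => ne_of_gt (es_pos_of_Gam hu hj))).symm

lemma F_superadd {A : Finset ι} {l k : ℕ} (hlk : l < k) {x y : ι → ℝ}
    (hx : x ∈ Gam A k) (hy : y ∈ Gam A k) :
    (es A k x / es A l x) ^ ((1:ℝ)/((k:ℝ)-(l:ℝ)))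
      + (es A k y / es A l y) ^ ((1:ℝ)/((k:ℝ)-(l:ℝ)))
      ≤ (es A k (x+y) / es A l (x+y)) ^ ((1:ℝ)/((k:ℝ)-(l:ℝ))) := by
  obtain ⟨r, rfl⟩ : ∃ r, k = r+1 := ⟨k-1, by omega⟩
  have hxy : x + y ∈ Gam A (r+1) := (master r A).2.2 x hx y hy
  have hcard : (Finset.Ico l (r+1)).card = r+1-l := Nat.card_Ico l (r+1)
  have hexp : (1:ℝ)/(((r+1:ℕ):ℝ)-(l:ℝ)) = (1:ℝ)/((Finset.Ico l (r+1)).card : ℝ) := by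
    rw [hcard, Nat.cast_sub (by omega : l ≤ r+1)]
  have hne : (Finset.Ico l (r+1)).Nonempty := by
    rw [← Finset.card_pos, hcard]; omega
  have hmemle : ∀ j ∈ Finset.Ico l (r+1), j + 1 ≤ r+1 := by
    intro j hj; rw [Finset.mem_Ico] at hj; omega
  have hapos : ∀ j ∈ Finset.Ico l (r+1), 0 < es A (j+1) x / es A j x := by
    intro j hj
    exact div_pos (es_pos_of_Gam hx (hmemle j hj)) (es_pos_of_Gam hx (by
      have := hmemle j hj; omega))
  have hbpos : ∀ j ∈ Finset.Ico l (r+1), 0 < es A (j+1) y / es A j y := by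
    intro j hj
    exact div_pos (es_pos_of_Gam hy (hmemle j hj)) (es_pos_of_Gam hy (by
      have := hmemle j hj; omega))
  have hcpos : ∀ j ∈ Finset.Ico l (r+1), 0 < es A (j+1) (x+y) / es A j (x+y) := by
    intro j hj
    exact div_pos (es_pos_of_Gam hxy (hmemle j hj)) (es_pos_of_Gam hxy (by
      have := hmemle j hj; omega))
  have hsup : ∀ j ∈ Finset.Ico l (r+1),
      es A (j+1) x / es A j x + es A (j+1) y / es A j y
        ≤ es A (j+1) (x+y) / es A j (x+y) := by
    intro j hj
    exact (master j A).2.1 x (Gam_mono (hmemle j hj) hx) y (Gam_mono (hmemle j hj) hy)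
  rw [ratio_prod (by omega) hx, ratio_prod (by omega) hy, ratio_prod (by omega) hxy, hexp]
  have hmah := mahler_ineq (Finset.Ico l (r+1)) hne _ _ hapos hbpos
  refine le_trans hmah ?_
  apply Real.rpow_le_rpow
  · exact le_of_lt (Finset.prod_pos (fun j hj => by linarith [hapos j hj, hbpos j hj]))
  · apply Finset.prod_le_prod
    · intro j hj; linarith [hapos j hj, hbpos j hj]
    · exact hsup
  · positivity

lemma F_homog {A : Finset ι} {l k : ℕ} (hlk : l < k) {c : ℝ} (hc : 0 < c) {u : ι → ℝ}
    (hu : u ∈ Gam A k) :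
    (es A k (c • u) / es A l (c • u)) ^ ((1:ℝ)/((k:ℝ)-(l:ℝ)))
      = c * (es A k u / es A l u) ^ ((1:ℝ)/((k:ℝ)-(l:ℝ))) := by
  have hl : 0 < es A l u := es_pos_of_Gam hu (by omega)
  have hk : 0 < es A k u := es_pos_of_Gam hu (le_refl _)
  rw [es_smul, es_smul]
  have hsplit : c^k = c^(k-l) * c^l := by rw [← pow_add]; congr 1; omega
  have h1 : c^k * es A k u / (c^l * es A l u) = c^(k-l) * (es A k u / es A l u) := by
    rw [hsplit]
    field_simp
  rw [h1, Real.mul_rpow (by positivity) (by positivity)]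
  congr 1
  rw [← Real.rpow_natCast c (k-l), ← Real.rpow_mul hc.le, Nat.cast_sub (by omega : l ≤ k),
    mul_one_div]
  have hne : (k:ℝ) - (l:ℝ) ≠ 0 := by
    have : (l:ℝ) < (k:ℝ) := by exact_mod_cast hlk
    linarith
  rw [div_self hne, Real.rpow_one]

lemma esymm_eq_es (n k : ℕ) (κ : Fin n → ℝ) : esymm n k κ = es Finset.univ k κ := rfl

/-- Concavity of (σ_k/σ_l)^{1/(k-l)} on the Gårding cone Γ_k. -/
theorem quotient_power_concave (n k l : ℕ) (hlk : l < k) (hkn : k ≤ n) :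
    ConcaveOn ℝ {κ : Fin n → ℝ | ∀ j : ℕ, 1 ≤ j → j ≤ k → 0 < esymm n j κ}
      (fun κ => (esymm n k κ / esymm n l κ) ^ ((1 : ℝ) / ((k : ℝ) - (l : ℝ)))) := by
  have hset : {κ : Fin n → ℝ | ∀ j : ℕ, 1 ≤ j → j ≤ k → 0 < esymm n j κ}
      = Gam (Finset.univ : Finset (Fin n)) k := rfl
  rw [hset]
  obtain ⟨r, rfl⟩ : ∃ r, k = r + 1 := ⟨k-1, by omega⟩
  constructor
  · -- convexity
    intro x hx y hy a b ha hb hab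
    rcases eq_or_lt_of_le ha with rfl | ha'
    · have hb1 : b = 1 := by linarith
      subst hb1
      simpa using hy
    · rcases eq_or_lt_of_le hb with rfl | hb'
      · have ha1 : a = 1 := by linarith
        subst ha1
        simpa using hx
      · have hx' : a • x ∈ Gam Finset.univ (r+1) := Gam_smul ha' hx
        have hy' : b • y ∈ Gam Finset.univ (r+1) := Gam_smul hb' hy
        exact (master r Finset.univ).2.2 _ hx' _ hy'
  · -- the concavity inequality
    intro x hx y hy a b ha hb hab
    simp only [smul_eq_mul, esymm_eq_es]
    rcases eq_or_lt_of_le ha with rfl | ha'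
    · have hb1 : b = 1 := by linarith
      subst hb1
      simp
    · rcases eq_or_lt_of_le hb with rfl | hb'
      · have ha1 : a = 1 := by linarith
        subst ha1
        simp
      · have hx' : a • x ∈ Gam Finset.univ (r+1) := Gam_smul ha' hx
        have hy' : b • y ∈ Gam Finset.univ (r+1) := Gam_smul hb' hy
        have hsup := F_superadd hlk hx' hy'
        have h1 := F_homog hlk ha' hx
        have h2 := F_homog hlk hb' hy
        calc a * (es Finset.univ (r+1) x / es Finset.univ l x) ^ ((1:ℝ)/(((r+1:ℕ):ℝ)-(l:ℝ)))
              + b * (es Finset.univ (r+1) y / es Finset.univ l y) ^ ((1:ℝ)/(((r+1:ℕ):ℝ)-(l:ℝ)))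
            = (es Finset.univ (r+1) (a • x) / es Finset.univ l (a • x))
                ^ ((1:ℝ)/(((r+1:ℕ):ℝ)-(l:ℝ)))
              + (es Finset.univ (r+1) (b • y) / es Finset.univ l (b • y))
                ^ ((1:ℝ)/(((r+1:ℕ):ℝ)-(l:ℝ))) := by rw [h1, h2]
          _ ≤ (es Finset.univ (r+1) (a • x + b • y) / es Finset.univ l (a • x + b • y))
                ^ ((1:ℝ)/(((r+1:ℕ):ℝ)-(l:ℝ))) := hsup
end

section
/- Let κ_1 ≥ ... ≥ κ_n > 0 with κ_1 ≥ 1, and set κ̃_1 = κ_1 and κ̃_p = κ_p − 1 for p > 1. Then for every p > 1: (a) if κ_p = κ_1, then σ_{k-1}(κ|p)/κ_1² ≤ σ_{k-1}(κ|1)/(κ_1(κ_1 − κ̃_p)); (b) if κ_p < κ_1, then σ_{k-1}(κ|p)/κ_1² ≤ 2σ_{k-1}(κ|1)/(κ_1(κ_1 − κ̃_p)) + (σ_{k-1}(κ|p) − σ_{k-1}(κ|1))/(κ_1(κ_1 − κ_p)). Consequently, for any reals t_2, ..., t_n: ∑_{p>1} σ_{k-1}(κ|p) t_p²/κ_1²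 ≤ 2∑_{p>1} σ_{k-2}(κ|1p) t_p²/κ_1 + 2∑_{p>1} σ_{k-1}(κ|1) t_p²/(κ_1(κ_1−κ̃_p)). -/
open Finset

lemma split_sum {n : ℕ} (κ : Fin n → ℝ) (s : Finset (Fin n)) (q : Fin n) (hq : q ∈ s) (m : ℕ) :
    ∑ t ∈ s.powersetCard (m+1), ∏ i ∈ t, κ i
      = κ q * ∑ t ∈ (s.erase q).powersetCard m, ∏ i ∈ t, κ i
        + ∑ t ∈ (s.erase q).powersetCard (m+1), ∏ i ∈ t, κ i := by
  conv_lhs => rw [← insert_erase hq]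
  rw [powersetCard_succ_insert (notMem_erase _ _)]
  rw [sum_union]
  · rw [sum_image, add_comm, mul_sum]
    · congr 1
      apply sum_congr rfl
      intro t ht
      rw [mem_powersetCard] at ht
      rw [prod_insert (fun h => (notMem_erase q s) (ht.1 h))]
    · intro t₁ h₁ t₂ h₂ h
      rw [mem_coe, mem_powersetCard] at h₁ h₂
      have hq1 : q ∉ t₁ := fun h => (notMem_erase q s) (h₁.1 h)
      have hq2 : q ∉ t₂ := fun h => (notMem_erase q s) (h₂.1 h)
      rw [← erase_insert hq1, ← erase_insert hq2, h]
  · rw [disjoint_left]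
    intro t ht ht'
    rw [mem_powersetCard] at ht
    rw [mem_image] at ht'
    obtain ⟨u, _, rfl⟩ := ht'
    exact (notMem_erase q s) (ht.1 (mem_insert_self q u))

lemma sum_nonneg' {n : ℕ} (κ : Fin n → ℝ) (hpos : ∀ i, 0 < κ i) (s : Finset (Fin n)) (m : ℕ) :
    0 ≤ ∑ t ∈ s.powersetCard m, ∏ i ∈ t, κ i :=
  Finset.sum_nonneg fun t _ => Finset.prod_nonneg fun i _ => (hpos i).le

lemma esymmDel2_nonneg {n : ℕ} (κ : Fin n → ℝ) (hpos : ∀ i, 0 < κ i) (m : ℕ) (p q : Fin n) :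
    0 ≤ esymmDel2 n m κ p q :=
  sum_nonneg' κ hpos _ m

lemma decomp {n : ℕ} (κ : Fin n → ℝ) (m : ℕ) (p q : Fin n) (hpq : p ≠ q) :
    esymmDel n (m+1) κ p = κ q * esymmDel2 n m κ q p + esymmDel2 n (m+1) κ q p := by
  unfold esymmDel esymmDel2
  rw [split_sum κ _ q (mem_erase.2 ⟨hpq.symm, mem_univ _⟩) m, Finset.erase_right_comm]

lemma keyA (K A B : ℝ) (hK : 1 ≤ K) (hA : 0 ≤ A) (hB : 0 ≤ B) :
    (K*A+B)/K^2 ≤ (K*A+B)/(K*(K-(K-1))) := by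
  have hK0 : 0 < K := by linarith
  apply div_le_div_of_nonneg_left (by nlinarith) (by nlinarith) (by nlinarith)

lemma keyB (K a A B : ℝ) (hK : 1 ≤ K) (ha : 0 < a) (hlt : a < K) (hA : 0 ≤ A) (hB : 0 ≤ B) :
    (K*A+B)/K^2 ≤ 2*(a*A+B)/(K*(K-(a-1))) + ((K*A+B)-(a*A+B))/(K*(K-a)) := by
  have hK0 : 0 < K := by linarith
  have hd2 : 0 < K - a := by linarith
  have hd1 : 0 < K - (a-1) := by linarith
  rw [show (K*A+B)-(a*A+B) = (K-a)*A by ring,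
      mul_comm K (K-a), mul_div_mul_left _ _ hd2.ne',
      div_add_div _ _ (by positivity) hK0.ne',
      div_le_div_iff₀ (by positivity) (by positivity)]
  nlinarith [mul_nonneg (mul_nonneg hA hK0.le) (mul_nonneg hK0.le hK0.le),
    mul_nonneg (mul_nonneg hB hK0.le) (mul_nonneg hK0.le hK0.le),
    mul_nonneg (mul_nonneg (mul_nonneg hA ha.le) hK0.le) (mul_nonneg hK0.le hK0.le),
    mul_nonneg (mul_nonneg hB (sub_nonneg.2 hK)) (mul_nonneg hK0.le (mul_nonneg hK0.le hK0.le)),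
    mul_nonneg (mul_nonneg hB ha.le) (mul_nonneg hK0.le (mul_nonneg hK0.le hK0.le))]

lemma keyC (K a A B T : ℝ) (hK : 1 ≤ K) (ha : 0 < a) (hle : a ≤ K) (hA : 0 ≤ A) (hB : 0 ≤ B)
    (hT : 0 ≤ T) :
    (K*A+B)*T/K^2 ≤ 2*(A*T/K) + 2*((a*A+B)*T/(K*(K-(a-1)))) := by
  have hK0 : 0 < K := by linarith
  have hd1 : 0 < K - (a-1) := by linarith
  have h1 : (K*A)*T/K^2 ≤ 2*(A*T/K) := by
    rw [show (K*A)*T/K^2 = A*T/K * (K/K) by ring, div_self hK0.ne', mul_one]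
    nlinarith [mul_nonneg hA hT, div_nonneg (mul_nonneg hA hT) hK0.le]
  have h2 : B*T/K^2 ≤ 2*((a*A+B)*T/(K*(K-(a-1)))) := by
    rw [show 2*((a*A+B)*T/(K*(K-(a-1)))) = (2*((a*A+B)*T))/(K*(K-(a-1))) from
      (mul_div_assoc _ _ _).symm, div_le_div_iff₀ (by positivity) (by positivity)]
    nlinarith [mul_nonneg (mul_nonneg hB hT) (mul_nonneg hK0.le hK0.le),
      mul_nonneg (mul_nonneg (mul_nonneg hA ha.le) hT) (mul_nonneg hK0.le hK0.le),
      mul_nonneg (mul_nonneg hB hT) (mul_nonneg hK0.le (sub_nonneg.2 hle))]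
  calc (K*A+B)*T/K^2 = (K*A)*T/K^2 + B*T/K^2 := by ring
    _ ≤ _ := by linarith

/-- Perturbed eigenvalue comparison (Lemma 3.2): with κ̃₁ = κ₁ and κ̃_p = κ_p − 1 for p > 1. -/
theorem perturbed_eigen_compare (n k : ℕ) (hk : 2 ≤ k) (hkn : k ≤ n)
    (κ : Fin n → ℝ) (hpos : ∀ i, 0 < κ i)
    (hdec : ∀ i j : Fin n, i ≤ j → κ j ≤ κ i)
    (h1 : 1 ≤ κ ⟨0, by omega⟩) :
    (∀ p : Fin n, p ≠ ⟨0, by omega⟩ → κ p = κ ⟨0, by omega⟩ →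
      esymmDel n (k - 1) κ p / (κ ⟨0, by omega⟩) ^ 2
        ≤ esymmDel n (k - 1) κ ⟨0, by omega⟩
            / (κ ⟨0, by omega⟩ * (κ ⟨0, by omega⟩ - (κ p - 1)))) ∧
    (∀ p : Fin n, p ≠ ⟨0, by omega⟩ → κ p < κ ⟨0, by omega⟩ →
      esymmDel n (k - 1) κ p / (κ ⟨0, by omega⟩) ^ 2
        ≤ 2 * esymmDel n (k - 1) κ ⟨0, by omega⟩
            / (κ ⟨0, by omega⟩ * (κ ⟨0, by omega⟩ - (κ p - 1)))
          + (esymmDel n (k - 1) κ p - esymmDel n (k - 1) κ ⟨0, by omega⟩)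
            / (κ ⟨0, by omega⟩ * (κ ⟨0, by omega⟩ - κ p))) ∧
    (∀ t : Fin n → ℝ,
      ∑ p ∈ Finset.univ.erase (⟨0, by omega⟩ : Fin n),
          esymmDel n (k - 1) κ p * t p ^ 2 / (κ ⟨0, by omega⟩) ^ 2
        ≤ 2 * ∑ p ∈ Finset.univ.erase (⟨0, by omega⟩ : Fin n),
            esymmDel2 n (k - 2) κ ⟨0, by omega⟩ p * t p ^ 2 / κ ⟨0, by omega⟩
          + 2 * ∑ p ∈ Finset.univ.erase (⟨0, by omega⟩ : Fin n),
              esymmDel n (k - 1) κ ⟨0, by omega⟩ * t p ^ 2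
                / (κ ⟨0, by omega⟩ * (κ ⟨0, by omega⟩ - (κ p - 1)))) := by
  have hn : 0 < n := by omega
  set z : Fin n := ⟨0, hn⟩ with hz
  have hk1 : k - 1 = (k - 2) + 1 := by omega
  have hX : ∀ p : Fin n, p ≠ z →
      esymmDel n (k-1) κ p = κ z * esymmDel2 n (k-2) κ z p + esymmDel2 n (k-1) κ z p := by
    intro p hp
    rw [hk1, decomp κ (k-2) p z hp, ← hk1]
  have hY : ∀ p : Fin n, p ≠ z →
      esymmDel n (k-1) κ z = κ p * esymmDel2 n (k-2) κ z p + esymmDel2 n (k-1) κ z p := by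
    intro p hp
    rw [hk1, decomp κ (k-2) z p hp.symm, ← hk1]
    unfold esymmDel2
    rw [Finset.erase_right_comm]
  have hzle : ∀ p : Fin n, z ≤ p := fun p => by
    simp [hz, Fin.le_def]
  refine ⟨?_, ?_, ?_⟩
  · intro p hp hpe
    rw [hX p hp, hY p hp, hpe]
    exact keyA (κ z) _ _ h1 (esymmDel2_nonneg κ hpos _ _ _) (esymmDel2_nonneg κ hpos _ _ _)
  · intro p hp hlt
    rw [hX p hp, hY p hp]
    exact keyB (κ z) (κ p) _ _ h1 (hpos p) hlt
      (esymmDel2_nonneg κ hpos _ _ _) (esymmDel2_nonneg κ hpos _ _ _)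
  · intro t
    have pointwise : ∀ p ∈ Finset.univ.erase z,
        esymmDel n (k-1) κ p * t p ^ 2 / (κ z) ^ 2
          ≤ 2 * (esymmDel2 n (k-2) κ z p * t p ^ 2 / κ z)
            + 2 * (esymmDel n (k-1) κ z * t p ^ 2 / (κ z * (κ z - (κ p - 1)))) := by
      intro p hp
      have hpz : p ≠ z := (mem_erase.1 hp).1
      rw [hX p hpz, hY p hpz]
      exact keyC (κ z) (κ p) _ _ (t p ^ 2) h1 (hpos p) (hdec z p (hzle p))
        (esymmDel2_nonneg κ hpos _ _ _) (esymmDel2_nonneg κ hpos _ _ _) (sq_nonneg _)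
    calc ∑ p ∈ Finset.univ.erase z, esymmDel n (k-1) κ p * t p ^ 2 / (κ z) ^ 2
        ≤ ∑ p ∈ Finset.univ.erase z,
            (2 * (esymmDel2 n (k-2) κ z p * t p ^ 2 / κ z)
              + 2 * (esymmDel n (k-1) κ z * t p ^ 2 / (κ z * (κ z - (κ p - 1))))) :=
          Finset.sum_le_sum pointwise
      _ = _ := by rw [Finset.sum_add_distrib, ← Finset.mul_sum, ← Finset.mul_sum]
end

section
/- Maclaurin's inequality: for nonnegative reals κ_1, ..., κ_n and 1 ≤ l ≤ k ≤ n, (σ_k(κ)/C(n,k))^{1/k} ≤ (σ_l(κ)/C(n,l))^{1/l}. -/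
open Finset

namespace Mac
open Polynomial


/-- esymm of a multiset of nonnegatives is nonnegative. -/
lemma esymm_nonneg_m (s : Multiset ℝ) (h : ∀ x ∈ s, 0 ≤ x) (k : ℕ) : 0 ≤ s.esymm k := by
  unfold Multiset.esymm
  apply Multiset.sum_nonneg
  intro x hx
  obtain ⟨t, ht, rfl⟩ := Multiset.mem_map.1 hx
  rw [Multiset.mem_powersetCard] at ht
  exact Multiset.prod_nonneg fun y hy => h y (Multiset.mem_of_le ht.1 hy)

/-- zero propagation upwards. -/
lemma esymm_zero_succ_m (s : Multiset ℝ) (h : ∀ x ∈ s, 0 ≤ x) (k : ℕ)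
    (h0 : s.esymm k = 0) : s.esymm (k + 1) = 0 := by
  by_contra hne
  -- find a (k+1)-submultiset with nonzero product
  have : ∃ t ∈ s.powersetCard (k+1), (t.prod : ℝ) ≠ 0 := by
    by_contra hall
    push_neg at hall
    apply hne
    unfold Multiset.esymm
    rw [Multiset.sum_eq_zero]
    intro x hx
    obtain ⟨t, ht, rfl⟩ := Multiset.mem_map.1 hx
    exact hall t ht
  obtain ⟨t, ht, htp⟩ := this
  rw [Multiset.mem_powersetCard] at ht
  have htne : t ≠ 0 := by
    intro h'
    simp [h'] at ht
  obtain ⟨a, ha⟩ := Multiset.exists_mem_of_ne_zero htne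
  have hprod : t.prod = a * (t.erase a).prod := by
    rw [← Multiset.prod_cons, Multiset.cons_erase ha]
  have h2 : (t.erase a).prod ≠ 0 := fun h' => htp (by rw [hprod, h', mul_zero])
  have hmem : t.erase a ∈ s.powersetCard k := by
    rw [Multiset.mem_powersetCard]
    exact ⟨le_trans (Multiset.erase_le a t) ht.1,
      by rw [Multiset.card_erase_of_mem ha, ht.2]; rfl⟩
  have hpos : 0 < (t.erase a).prod := by
    rcases lt_or_eq_of_le (Multiset.prod_nonneg fun y hy => h y
      (Multiset.mem_of_le (le_trans (Multiset.erase_le a t) ht.1) hy)) with h' | h'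
    · exact h'
    · exact absurd h'.symm h2
  have : (t.erase a).prod ≤ s.esymm k := by
    unfold Multiset.esymm
    apply Multiset.single_le_sum
    · intro x hx
      obtain ⟨u, hu, rfl⟩ := Multiset.mem_map.1 hx
      rw [Multiset.mem_powersetCard] at hu
      exact Multiset.prod_nonneg fun y hy => h y (Multiset.mem_of_le hu.1 hy)
    · exact Multiset.mem_map_of_mem _ hmem
  rw [h0] at this
  exact absurd (lt_of_lt_of_le hpos this) (lt_irrefl 0)



variable {ι : Type*} [DecidableEq ι]

lemma powersetCard_erase (u : Finset ι) (p : ι) (k : ℕ) :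
    (u.erase p).powersetCard k = (u.powersetCard k).filter (fun t => p ∉ t) := by
  ext t
  simp only [mem_powersetCard, mem_filter, Finset.subset_erase]
  tauto

lemma sum_del (u : Finset ι) (k : ℕ) (κ : ι → ℝ) :
    ∑ p ∈ u, ∑ t ∈ (u.erase p).powersetCard k, ∏ i ∈ t, κ i
      = (u.card - k : ℕ) * ∑ t ∈ u.powersetCard k, ∏ i ∈ t, κ i := by
  simp_rw [powersetCard_erase, Finset.sum_filter]
  rw [Finset.sum_comm, Finset.mul_sum]
  refine Finset.sum_congr rfl fun t ht => ?_
  rw [Finset.mem_powersetCard] at ht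
  rw [← Finset.sum_filter, Finset.sum_const, Finset.filter_not, Finset.filter_mem_eq_inter,
    Finset.sdiff_inter_self_left, Finset.card_sdiff_of_subset ht.1, ht.2, nsmul_eq_mul]

variable {n : ℕ} (κ : Fin n → ℝ)

private noncomputable def A (i : Fin n) : ℝ := ∏ j ∈ Finset.univ.erase i, κ j

lemma cardu : (Finset.univ : Finset (Fin n)).card = n := by simp

lemma B1 (hn : 1 ≤ n) : esymm n (n-1) κ = ∑ i, A κ i := by
  have h := sum_del (Finset.univ : Finset (Fin n)) (n-1) κ
  rw [cardu] at h
  have h1 : ∀ i : Fin n, ∑ t ∈ ((Finset.univ : Finset (Fin n)).erase i).powersetCard (n-1),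
      ∏ j ∈ t, κ j = A κ i := by
    intro i
    have hc : ((Finset.univ : Finset (Fin n)).erase i).card = n - 1 := by
      rw [Finset.card_erase_of_mem (Finset.mem_univ i), cardu]
    rw [← hc, Finset.powersetCard_self, Finset.sum_singleton]
    rfl
  simp_rw [h1] at h
  have h2 : n - (n-1) = 1 := by omega
  rw [h2] at h
  rw [esymm]
  simpa using h.symm

lemma B2 : esymm n n κ = ∏ i, κ i := by
  have h : Finset.univ.powersetCard n = ({Finset.univ} : Finset (Finset (Fin n))) := by
    have := Finset.powersetCard_self (Finset.univ : Finset (Fin n))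
    rwa [cardu] at this
  rw [esymm, h, Finset.sum_singleton]

lemma Amul (i j : Fin n) (hij : j ≠ i) :
    A κ i * A κ j = (∏ l, κ l) * ∏ l ∈ ((Finset.univ.erase i).erase j), κ l := by
  have hj : j ∈ (Finset.univ : Finset (Fin n)).erase i := by
    simp [hij]
  have hi : i ∈ (Finset.univ : Finset (Fin n)).erase j :=
    Finset.mem_erase.2 ⟨Ne.symm hij, Finset.mem_univ i⟩
  have h1 : A κ i = κ j * ∏ l ∈ ((Finset.univ.erase i).erase j), κ l :=
    (Finset.mul_prod_erase _ κ hj).symm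
  have h2 : A κ j = κ i * ∏ l ∈ ((Finset.univ.erase j).erase i), κ l :=
    (Finset.mul_prod_erase _ κ hi).symm
  have h3 : (Finset.univ.erase j).erase i = ((Finset.univ : Finset (Fin n)).erase i).erase j :=
    Finset.erase_right_comm
  have h4 : (∏ l, κ l) = κ i * A κ i := (Finset.mul_prod_erase _ κ (Finset.mem_univ i)).symm
  rw [h1] at h4 ⊢
  rw [h2, h3, h4]
  ring

lemma B3 (hn : 2 ≤ n) :
    ∑ i, ∑ j ∈ Finset.univ.erase i, (A κ i * A κ j)
      = 2 * ((∏ i, κ i) * esymm n (n-2) κ) := by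
  have step1 : ∀ i : Fin n, ∑ j ∈ Finset.univ.erase i, (A κ i * A κ j)
      = (∏ l, κ l) * ∑ t ∈ ((Finset.univ : Finset (Fin n)).erase i).powersetCard (n-2),
          ∏ l ∈ t, κ l := by
    intro i
    have inner : ∑ j ∈ ((Finset.univ : Finset (Fin n)).erase i),
        ∑ t ∈ (((Finset.univ : Finset (Fin n)).erase i).erase j).powersetCard (n-2), ∏ l ∈ t, κ l
        = ((n - 1) - (n-2) : ℕ) * ∑ t ∈ ((Finset.univ : Finset (Fin n)).erase i).powersetCard (n-2),
            ∏ l ∈ t, κ l := by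
      have := sum_del ((Finset.univ : Finset (Fin n)).erase i) (n-2) κ
      rwa [Finset.card_erase_of_mem (Finset.mem_univ i), cardu] at this
    have h1 : ∀ j ∈ (Finset.univ : Finset (Fin n)).erase i,
        A κ i * A κ j = (∏ l, κ l) *
          ∑ t ∈ (((Finset.univ : Finset (Fin n)).erase i).erase j).powersetCard (n-2),
            ∏ l ∈ t, κ l := by
      intro j hj
      have hij : j ≠ i := Finset.ne_of_mem_erase hj
      have hc : (((Finset.univ : Finset (Fin n)).erase i).erase j).card = n - 2 := by
        rw [Finset.card_erase_of_mem, Finset.card_erase_of_mem (Finset.mem_univ i), cardu]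
        · omega
        · exact Finset.mem_erase.2 ⟨hij, Finset.mem_univ j⟩
      rw [Amul κ i j hij, ← hc, Finset.powersetCard_self, Finset.sum_singleton]
    rw [Finset.sum_congr rfl h1, ← Finset.mul_sum, inner]
    have : (n-1) - (n-2) = 1 := by omega
    rw [this, Nat.cast_one, one_mul]
  rw [Finset.sum_congr rfl (fun i _ => step1 i), ← Finset.mul_sum]
  have := sum_del (Finset.univ : Finset (Fin n)) (n-2) κ
  rw [cardu] at this
  rw [this]
  have : n - (n-2) = 2 := by omega
  rw [this, esymm]
  push_cast
  ring

lemma offdiag_eq (hn : 1 ≤ n) :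
    ∑ i, ∑ j ∈ Finset.univ.erase i, (A κ i * A κ j)
      = (∑ i, A κ i)^2 - ∑ i, (A κ i)^2 := by
  have h1 : (∑ i, A κ i)^2 = ∑ i, ∑ j, (A κ i * A κ j) := by
    rw [sq, Finset.sum_mul_sum]
  rw [h1, ← Finset.sum_sub_distrib]
  refine Finset.sum_congr rfl fun i _ => ?_
  rw [← Finset.add_sum_erase _ _ (Finset.mem_univ i), sq]
  ring

/-- Base case of Newton's inequality: the top window. -/
lemma newton_base (hn : 2 ≤ n) (h : ∀ i, 0 ≤ κ i) :
    esymm n (n-2) κ / (n.choose (n-2)) * (esymm n n κ / (n.choose n))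
      ≤ (esymm n (n-1) κ / (n.choose (n-1)))^2 := by
  have hS := sq_sum_le_card_mul_sum_sq (s := (Finset.univ : Finset (Fin n))) (f := A κ)
  rw [cardu] at hS
  have hB3 := B3 κ hn
  rw [offdiag_eq κ (by omega)] at hB3
  set S := ∑ i, A κ i with hSdef
  set Q := ∑ i, (A κ i)^2 with hQdef
  have hc2 : (n.choose (n-2) : ℝ) = (n:ℝ) * ((n:ℝ)-1) / 2 := by
    rw [← Nat.choose_symm (by omega : n - 2 ≤ n)]
    have : n - (n - 2) = 2 := by omega
    rw [this, Nat.cast_choose_two]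
  have hc1 : (n.choose (n-1) : ℝ) = (n:ℝ) := by
    rw [← Nat.choose_symm (by omega : n - 1 ≤ n)]
    have : n - (n - 1) = 1 := by omega
    rw [this, Nat.choose_one_right]
  have hcn : (n.choose n : ℝ) = 1 := by rw [Nat.choose_self, Nat.cast_one]
  rw [hc2, hc1, hcn, B1 κ (by omega), B2 κ, ← hSdef, div_one]
  have hN : (2:ℝ) ≤ (n:ℝ) := by exact_mod_cast hn
  have hprod : esymm n (n-2) κ * (∏ i, κ i) = (S^2 - Q)/2 := by linarith [hB3]
  have hpos : (0:ℝ) < (n:ℝ) * ((n:ℝ)-1) := by nlinarith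
  have key : esymm n (n-2) κ / ((n:ℝ) * ((n:ℝ)-1)/2) * (∏ i, κ i)
      = (S^2 - Q) / ((n:ℝ) * ((n:ℝ)-1)) := by
    rw [div_mul_eq_mul_div, hprod]
    field_simp
  rw [key, div_pow, div_le_div_iff₀ hpos (by nlinarith)]
  nlinarith [mul_le_mul_of_nonneg_left hS (by positivity : (0:ℝ) ≤ (n:ℝ))]




lemma choose_id (m r : ℕ) : (m + 1 - r) * (m+1).choose r = (m+1) * m.choose r := by
  rw [mul_comm, ← Nat.choose_succ_right_eq, ← Nat.add_one_mul_choose_eq]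

lemma step (k m : ℕ) (hm : k + 2 ≤ m) (s : Multiset ℝ) (hs : ∀ x ∈ s, 0 ≤ x)
    (hcard : Multiset.card s = m + 1)
    (IH : ∀ u : Multiset ℝ, (∀ x ∈ u, 0 ≤ x) → Multiset.card u = m →
      u.esymm k / (m.choose k : ℝ) * (u.esymm (k+2) / (m.choose (k+2) : ℝ))
        ≤ (u.esymm (k+1) / (m.choose (k+1) : ℝ))^2) :
    s.esymm k / ((m+1).choose k : ℝ) * (s.esymm (k+2) / ((m+1).choose (k+2) : ℝ))
      ≤ (s.esymm (k+1) / ((m+1).choose (k+1) : ℝ))^2 := by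
  classical
  set f : Polynomial ℝ := (s.map fun a => Polynomial.X + Polynomial.C a).prod with hf
  have hmonic : f.Monic := monic_multiset_prod_of_monic _ _ fun a _ => monic_X_add_C a
  have hdeg : f.natDegree = m + 1 := by
    rw [hf, natDegree_multiset_prod_of_monic _ (fun p hp => by
      obtain ⟨a, _, rfl⟩ := Multiset.mem_map.1 hp; exact monic_X_add_C a)]
    simp [Multiset.map_map, natDegree_X_add_C, hcard]
    omega
  have hroots : f.roots = s.map (fun a => -a) := by
    have h1 : (s.map fun a => Polynomial.X + Polynomial.C a)
        = (s.map (fun a => -a)).map (fun a => Polynomial.X - Polynomial.C a) := by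
      rw [Multiset.map_map]
      exact Multiset.map_congr rfl fun a _ => by simp [sub_eq_add_neg]
    rw [hf, h1, roots_multiset_prod_X_sub_C]
  have hfcard : Multiset.card f.roots = m + 1 := by rw [hroots, Multiset.card_map, hcard]
  set g := Polynomial.derivative f with hg
  have hgcoeff : g.coeff m = (m+1 : ℝ) := by
    rw [hg, Polynomial.coeff_derivative]
    have h1 : f.coeff (m+1) = 1 := by rw [← hdeg]; exact hmonic.coeff_natDegree
    rw [h1]; push_cast; ring
  have hgne : g ≠ 0 := by
    intro h0
    rw [h0, Polynomial.coeff_zero] at hgcoeff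
    have h2 : (0:ℝ) < (m:ℝ)+1 := by positivity
    rw [← hgcoeff] at h2
    exact lt_irrefl 0 h2
  have hgdegle : g.natDegree ≤ m := by
    have h1 : g.natDegree < f.natDegree :=
      Polynomial.natDegree_derivative_lt (by simp [hdeg])
    rw [hdeg] at h1
    omega
  have hgdeg : g.natDegree = m := le_antisymm hgdegle (Polynomial.le_natDegree_of_ne_zero (by
    rw [hgcoeff]; positivity))
  have hgroots : Multiset.card g.roots = m := by
    have h1 : Multiset.card f.roots ≤ Multiset.card g.roots + 1 := by
      rw [hg]; exact Polynomial.card_roots_le_derivative f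
    have h2 : Multiset.card g.roots ≤ m := by
      have := Polynomial.card_roots' g
      omega
    omega
  have hsplits : g.Splits :=
    Polynomial.splits_iff_card_roots.2 (by rw [hgroots, hgdeg])
  have hrootsle : ∀ z ∈ g.roots, z ≤ 0 := by
    intro z hz
    by_contra hpos
    push_neg at hpos
    have hzr : g.eval z = 0 := (Polynomial.mem_roots hgne).1 hz
    have hd : g = (s.map fun a =>
        ((s.erase a).map fun b => Polynomial.X + Polynomial.C b).prod
          * Polynomial.derivative (Polynomial.X + Polynomial.C a)).sum := by
      rw [hg, hf]
      exact Polynomial.derivative_prod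
    have heval : 0 < g.eval z := by
      have e1 := map_multiset_sum (Polynomial.evalRingHom z) (s.map fun a =>
          ((s.erase a).map fun b => Polynomial.X + Polynomial.C b).prod
            * Polynomial.derivative (Polynomial.X + Polynomial.C a))
      simp only [Polynomial.coe_evalRingHom, Multiset.map_map, Function.comp] at e1
      rw [hd, e1]
      have e2 : ∀ a ∈ s, (fun a => Polynomial.eval z
            (((s.erase a).map fun b => Polynomial.X + Polynomial.C b).prod
              * Polynomial.derivative (Polynomial.X + Polynomial.C a))) a
          = (fun a => ((s.erase a).map fun b => z + b).prod) a := by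
        intro a _
        simp only [Polynomial.derivative_X_add_C, mul_one, Polynomial.eval_multiset_prod,
          Multiset.map_map]
        congr 1
        exact Multiset.map_congr rfl fun b _ => by simp
      rw [Multiset.map_congr rfl e2]
      have hposterm : ∀ x ∈ s.map (fun a => ((s.erase a).map fun b => z + b).prod), 0 < x := by
        intro x hx
        obtain ⟨a, ha, rfl⟩ := Multiset.mem_map.1 hx
        apply Multiset.prod_pos
        intro y hy
        obtain ⟨b, hb, rfl⟩ := Multiset.mem_map.1 hy
        have := hs b (Multiset.mem_of_le (Multiset.erase_le a s) hb)
        linarith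
      have hne : s ≠ 0 := by
        intro h0; rw [h0] at hcard; simp at hcard
      obtain ⟨a, ha⟩ := Multiset.exists_mem_of_ne_zero hne
      have hmem := Multiset.mem_map_of_mem (fun a => ((s.erase a).map fun b => z + b).prod) ha
      exact lt_of_lt_of_le (hposterm _ hmem)
        (Multiset.single_le_sum (fun x hx => le_of_lt (hposterm x hx)) _ hmem)
    rw [hzr] at heval
    exact lt_irrefl 0 heval
  set t := g.roots.map (fun z => -z) with ht
  have htcard : Multiset.card t = m := by rw [ht, Multiset.card_map, hgroots]
  have htnn : ∀ x ∈ t, 0 ≤ x := by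
    intro x hx
    obtain ⟨z, hz, rfl⟩ := Multiset.mem_map.1 hx
    linarith [hrootsle z hz]
  have hlead : g.leadingCoeff = (m+1:ℝ) := by
    rw [Polynomial.leadingCoeff, hgdeg, hgcoeff]
  have hgprod : g = Polynomial.C ((m:ℝ)+1) * (t.map fun a => Polynomial.X + Polynomial.C a).prod := by
    have h1 := hsplits.eq_prod_roots
    rw [hlead] at h1
    rw [h1]
    congr 1
    rw [ht, Multiset.map_map]
    exact congrArg Multiset.prod
      (Multiset.map_congr rfl fun z _ => by
        simp [Function.comp, sub_eq_add_neg])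
  have key : ∀ r, r ≤ m → ((m:ℝ)+1) * t.esymm r = ((m + 1 - r : ℕ) : ℝ) * s.esymm r := by
    intro r hr
    have h2 : f.coeff (m - r + 1) = s.esymm r := by
      rw [hf, Multiset.prod_X_add_C_coeff s (by omega : m - r + 1 ≤ Multiset.card s)]
      congr 1
      omega
    have h1 : g.coeff (m - r) = ((m - r + 1 : ℕ):ℝ) * s.esymm r := by
      rw [hg, Polynomial.coeff_derivative, h2]
      push_cast; ring
    have h3 : g.coeff (m - r) = ((m:ℝ)+1) * t.esymm r := by
      rw [hgprod, Polynomial.coeff_C_mul,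
        Multiset.prod_X_add_C_coeff t (by rw [htcard]; omega : m - r ≤ Multiset.card t)]
      have : Multiset.card t - (m - r) = r := by rw [htcard]; omega
      rw [this]
    rw [h3] at h1
    rw [h1]
    congr 2
    omega
  have hE : ∀ r, r ≤ m → s.esymm r / (((m+1).choose r : ℕ) : ℝ) = t.esymm r / ((m.choose r : ℕ) : ℝ) := by
    intro r hr
    have hc1 : (0:ℝ) < ((m+1).choose r : ℝ) := by
      exact_mod_cast Nat.choose_pos (by omega : r ≤ m + 1)
    have hc2 : (0:ℝ) < (m.choose r : ℝ) := by
      exact_mod_cast Nat.choose_pos hr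
    rw [div_eq_div_iff (ne_of_gt hc1) (ne_of_gt hc2)]
    have hk := key r hr
    have hch : ((m + 1 - r : ℕ) : ℝ) * ((m+1).choose r : ℝ) = ((m:ℝ)+1) * (m.choose r : ℝ) := by
      have h0 := congrArg (fun x : ℕ => (x : ℝ)) (choose_id m r)
      push_cast [Nat.cast_sub (show r ≤ m + 1 by omega)] at h0
      rw [Nat.cast_sub (show r ≤ m + 1 by omega)]
      push_cast
      linarith [h0]
    have hm1 : (0:ℝ) < (m:ℝ)+1 := by positivity
    apply mul_left_cancel₀ (ne_of_gt hm1)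
    calc ((m:ℝ)+1) * (s.esymm r * (m.choose r : ℝ))
        = s.esymm r * (((m:ℝ)+1) * (m.choose r : ℝ)) := by ring
      _ = s.esymm r * (((m + 1 - r : ℕ) : ℝ) * ((m+1).choose r : ℝ)) := by rw [hch]
      _ = (((m + 1 - r : ℕ) : ℝ) * s.esymm r) * ((m+1).choose r : ℝ) := by ring
      _ = (((m:ℝ)+1) * t.esymm r) * ((m+1).choose r : ℝ) := by rw [hk]
      _ = ((m:ℝ)+1) * (t.esymm r * ((m+1).choose r : ℝ)) := by ring
  rw [hE k (by omega), hE (k+1) (by omega), hE (k+2) (by omega)]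
  exact IH t htnn htcard




lemma newton_m (k m : ℕ) (hm : k + 2 ≤ m) :
    ∀ (s : Multiset ℝ), (∀ x ∈ s, 0 ≤ x) → Multiset.card s = m →
    s.esymm k / (m.choose k : ℝ) * (s.esymm (k+2) / (m.choose (k+2) : ℝ))
      ≤ (s.esymm (k+1) / (m.choose (k+1) : ℝ))^2 := by
  induction m, hm using Nat.le_induction with
  | base =>
    intro s hs hc
    have hlen : s.toList.length = k + 2 := by rw [Multiset.length_toList, hc]
    have hl : (s.toList : Multiset ℝ) = s := s.coe_toList
    have hmap : Finset.univ.val.map s.toList.get = (s.toList : Multiset ℝ) := by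
      have h1 : (List.ofFn s.toList.get) = s.toList := List.ofFn_get _
      rw [Fin.univ_val_map, h1]
    have hknn : ∀ i, 0 ≤ s.toList.get i := by
      intro i
      have hmem : s.toList.get i ∈ (↑s.toList : Multiset ℝ) :=
        Multiset.mem_coe.2 (s.toList.get_mem i)
      rw [hl] at hmem
      exact hs _ hmem
    have hb := newton_base s.toList.get (by omega) hknn
    have he : ∀ j, esymm s.toList.length j s.toList.get = s.esymm j := by
      intro j
      rw [show esymm s.toList.length j s.toList.get
          = (Finset.univ.val.map s.toList.get).esymm j from (Finset.esymm_map_val _ _ _).symm,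
        hmap, hl]
    rw [he, he, he] at hb
    rw [hlen] at hb
    have e2 : k + 2 - 2 = k := by omega
    have e1 : k + 2 - 1 = k + 1 := by omega
    rw [e2, e1] at hb
    exact hb
  | succ m hm IH =>
    intro s hs hc
    exact step k m hm s hs hc IH

lemma esymm_fin_eq (n j : ℕ) (κ : Fin n → ℝ) :
    esymm n j κ = (Finset.univ.val.map κ).esymm j := (Finset.esymm_map_val _ _ _).symm

lemma card_univ_val (n : ℕ) (κ : Fin n → ℝ) :
    Multiset.card (Finset.univ.val.map κ) = n := by
  rw [Multiset.card_map]
  exact Finset.card_univ.trans (Fintype.card_fin n)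

lemma mem_univ_val_map {n : ℕ} {κ : Fin n → ℝ} (h : ∀ i, 0 ≤ κ i) :
    ∀ x ∈ Finset.univ.val.map κ, 0 ≤ x := by
  intro x hx
  obtain ⟨i, _, rfl⟩ := Multiset.mem_map.1 hx
  exact h i

lemma newton_fin (n k : ℕ) (hk : k + 2 ≤ n) (κ : Fin n → ℝ) (h : ∀ i, 0 ≤ κ i) :
    esymm n k κ / (n.choose k : ℝ) * (esymm n (k+2) κ / (n.choose (k+2) : ℝ))
      ≤ (esymm n (k+1) κ / (n.choose (k+1) : ℝ))^2 := by
  simp only [esymm_fin_eq]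
  exact newton_m k n hk _ (mem_univ_val_map h) (card_univ_val n κ)

lemma esymm_nonneg_fin (n j : ℕ) (κ : Fin n → ℝ) (h : ∀ i, 0 ≤ κ i) : 0 ≤ esymm n j κ := by
  rw [esymm_fin_eq]
  exact esymm_nonneg_m _ (mem_univ_val_map h) j

lemma esymm_zero_succ_fin (n j : ℕ) (κ : Fin n → ℝ) (h : ∀ i, 0 ≤ κ i)
    (h0 : esymm n j κ = 0) : esymm n (j+1) κ = 0 := by
  rw [esymm_fin_eq] at h0 ⊢
  exact esymm_zero_succ_m _ (mem_univ_val_map h) j h0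

lemma esymm_zero' (n j : ℕ) (κ : Fin n → ℝ) (h : ∀ i, 0 ≤ κ i) : esymm n 0 κ = 1 := by
  rw [esymm]
  simp

lemma P_nonneg (n j : ℕ) (κ : Fin n → ℝ) (h : ∀ i, 0 ≤ κ i) :
    0 ≤ esymm n j κ / (n.choose j : ℝ) := by
  apply div_nonneg (esymm_nonneg_fin n j κ h) (by positivity)

/-- key chain step : P (j+1) ^ j ≤ P j ^ (j+1). -/
lemma pow_step (n : ℕ) (κ : Fin n → ℝ) (h : ∀ i, 0 ≤ κ i) :
    ∀ j, 1 ≤ j → j + 1 ≤ n →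
    (esymm n (j+1) κ / (n.choose (j+1) : ℝ)) ^ j
      ≤ (esymm n j κ / (n.choose j : ℝ)) ^ (j+1) := by
  intro j hj
  induction j, hj using Nat.le_induction with
  | base =>
    intro h2n
    have hnf := newton_fin n 0 h2n κ h
    rw [esymm_zero' n 0 κ h] at hnf
    simp only [Nat.choose_zero_right, Nat.cast_one, div_one, one_mul] at hnf
    rw [pow_one]
    exact hnf
  | succ j hj IH =>
    intro hjn
    have hIH := IH (by omega)
    have hnf := newton_fin n j (by omega) κ h
    set x := esymm n (j+2) κ / (n.choose (j+2) : ℝ) with hx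
    set y := esymm n (j+1) κ / (n.choose (j+1) : ℝ) with hy
    set w := esymm n j κ / (n.choose j : ℝ) with hw
    have hxnn : 0 ≤ x := P_nonneg n (j+2) κ h
    have hynn : 0 ≤ y := P_nonneg n (j+1) κ h
    have hwnn : 0 ≤ w := P_nonneg n j κ h
    -- goal : x ^ (j+1) ≤ y ^ (j+2)
    rcases eq_or_lt_of_le hynn with hy0 | hy0
    · -- y = 0, then esymm (j+1) = 0 hence esymm (j+2) = 0, x = 0
      have h1 : esymm n (j+1) κ = 0 := by
        have hcpos : (0:ℝ) < (n.choose (j+1) : ℝ) := by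
          exact_mod_cast Nat.choose_pos (by omega : j + 1 ≤ n)
        have := hy0.symm
        rw [hy, _root_.div_eq_zero_iff] at this
        rcases this with h' | h'
        · exact h'
        · exact absurd h' (ne_of_gt hcpos)
      have h2 : esymm n (j+2) κ = 0 := esymm_zero_succ_fin n (j+1) κ h h1
      have hx0 : x = 0 := by rw [hx, h2, zero_div]
      rw [hx0, ← hy0, zero_pow (by omega : j + 1 ≠ 0), zero_pow (by omega : j + 2 ≠ 0)]
    · -- y > 0
      have key : x ^ (j+1) * y ^ j ≤ y ^ (j+2) * y ^ j := by
        calc x ^ (j+1) * y ^ j ≤ x ^ (j+1) * w ^ (j+1) :=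
              mul_le_mul_of_nonneg_left hIH (by positivity)
          _ = (w * x) ^ (j+1) := by rw [mul_pow]; ring
          _ ≤ (y ^ 2) ^ (j+1) := pow_le_pow_left₀ (by positivity) hnf _
          _ = y ^ (j+2) * y ^ j := by rw [← pow_add, ← pow_mul]; congr 1; omega
      exact le_of_mul_le_mul_right key (by positivity)



lemma rpow_step (n : ℕ) (κ : Fin n → ℝ) (h : ∀ i, 0 ≤ κ i) (j : ℕ) (hj : 1 ≤ j)
    (hjn : j + 1 ≤ n) :
    (esymm n (j+1) κ / (n.choose (j+1) : ℝ)) ^ ((1:ℝ)/(j+1 : ℕ))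
      ≤ (esymm n j κ / (n.choose j : ℝ)) ^ ((1:ℝ)/(j : ℕ)) := by
  set x := esymm n (j+1) κ / (n.choose (j+1) : ℝ) with hx
  set y := esymm n j κ / (n.choose j : ℝ) with hy
  have hxnn : 0 ≤ x := P_nonneg n (j+1) κ h
  have hynn : 0 ≤ y := P_nonneg n j κ h
  have hp : x ^ j ≤ y ^ (j+1) := pow_step n κ h j hj hjn
  have hjpos : (0:ℝ) < (j:ℝ) := by exact_mod_cast hj
  have h1 : ((x ^ j : ℝ)) ^ ((1:ℝ)/((j:ℝ)*((j:ℝ)+1)))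
      ≤ ((y ^ (j+1) : ℝ)) ^ ((1:ℝ)/((j:ℝ)*((j:ℝ)+1))) :=
    Real.rpow_le_rpow (by positivity) hp (by positivity)
  rw [← Real.rpow_natCast x j, ← Real.rpow_natCast y (j+1), ← Real.rpow_mul hxnn,
    ← Real.rpow_mul hynn] at h1
  have e1 : ((j:ℕ):ℝ) * ((1:ℝ)/((j:ℝ)*((j:ℝ)+1))) = (1:ℝ)/(((j+1:ℕ)):ℝ) := by
    push_cast
    field_simp
  have e2 : (((j+1:ℕ)):ℝ) * ((1:ℝ)/((j:ℝ)*((j:ℝ)+1))) = (1:ℝ)/((j:ℕ):ℝ) := by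
    push_cast
    field_simp
  rwa [e1, e2] at h1

lemma chain (n l : ℕ) (κ : Fin n → ℝ) (h : ∀ i, 0 ≤ κ i) (hl : 1 ≤ l) :
    ∀ k, l ≤ k → k ≤ n →
    (esymm n k κ / (n.choose k : ℝ)) ^ ((1:ℝ)/(k : ℕ))
      ≤ (esymm n l κ / (n.choose l : ℝ)) ^ ((1:ℝ)/(l : ℕ)) := by
  intro k hlk
  induction k, hlk using Nat.le_induction with
  | base => intro _; exact le_refl _
  | succ k hk IH =>
    intro hkn
    have h1 := rpow_step n κ h k (by omega) hkn
    have h2 := IH (by omega)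
    exact le_trans h1 h2


end Mac

/-- Maclaurin's inequality. -/
theorem maclaurin_inequality (n k l : ℕ) (hl : 1 ≤ l) (hlk : l ≤ k) (hkn : k ≤ n)
    (κ : Fin n → ℝ) (h : ∀ i, 0 ≤ κ i) :
    (esymm n k κ / (n.choose k : ℝ)) ^ ((1 : ℝ) / k)
      ≤ (esymm n l κ / (n.choose l : ℝ)) ^ ((1 : ℝ) / l) := by
  exact Mac.chain n l κ h hl k hlk hkn
end
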